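/- arXiv:1406.7651 — 10 statements merged into one kernel-verified Lean document; each statement's English description precedes it below -/
import Mathlib

section
/- Let p be a prime, n ≥ 1, F = GF(p), α a primitive element of GF(p^n), m the minimal polynomial of α over F, and A the n×n companion matrix of m over F. Then A is invertible and its multiplicative order (as an element of the group of invertible n×n matrices over F) is exactly p^n − 1. -/
set_option maxHeartbeats 1000000

/-- Let `p` be a prime, `n ≥ 1`, `F = GF(p)`, `α` a primitive element
of `GF(pⁿ)`, `m` its minimal polynomial over `F`, and `A` the `n × n` companion matrix
of `m` over `F` (i.e. the matrix whose characteristic and minimal polynomials equal `m`).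
Then `A` is invertible and its multiplicative order is exactly `pⁿ - 1`. -/
theorem stmt1 (p n : ℕ) [Fact p.Prime] (hn : 1 ≤ n)
    (α : GaloisField p n) (hα : orderOf α = p ^ n - 1)
    (m : Polynomial (ZMod p)) (hm : m = minpoly (ZMod p) α)
    (A : Matrix (Fin n) (Fin n) (ZMod p))
    (hchar : A.charpoly = m) (hminA : minpoly (ZMod p) A = m) :
    IsUnit A ∧ orderOf A = p ^ n - 1 := by
  have hint : IsIntegral (ZMod p) α := Algebra.IsIntegral.isIntegral α
  have hirr : Irreducible m := hm ▸ minpoly.irreducible hint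
  haveI : Fact (Irreducible m) := ⟨hirr⟩
  haveI : Nonempty (Fin n) := ⟨⟨0, hn⟩⟩
  have hA : (Polynomial.aeval A) m = 0 := hminA ▸ minpoly.aeval _ _
  have hαm : (Polynomial.aeval α) m = 0 := hm ▸ minpoly.aeval _ _
  have hker : ∀ a ∈ Ideal.span {m}, (Polynomial.aeval A) a = 0 := by
    intro a ha
    rw [Ideal.mem_span_singleton] at ha
    obtain ⟨c, rfl⟩ := ha
    rw [map_mul, hA, zero_mul]
  let φ : AdjoinRoot m →+* Matrix (Fin n) (Fin n) (ZMod p) :=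
    Ideal.Quotient.lift _ ((Polynomial.aeval A).toRingHom) hker
  have hφroot : φ (AdjoinRoot.root m) = A := by
    have : φ ((Ideal.Quotient.mk (Ideal.span {m})) Polynomial.X) = A := by
      exact Polynomial.aeval_X A
    exact this
  let ψ := AdjoinRoot.liftAlgHom m (Algebra.ofId (ZMod p) (GaloisField p n)) α hαm
  have hφ : Function.Injective φ := φ.injective
  have hψ : Function.Injective ψ := ψ.toRingHom.injective
  have h1 : orderOf A = orderOf (AdjoinRoot.root m) := by
    rw [← hφroot]
    exact orderOf_injective φ.toMonoidHom hφ (AdjoinRoot.root m)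
  have h2 : orderOf α = orderOf (AdjoinRoot.root m) := by
    have := orderOf_injective ψ.toRingHom.toMonoidHom hψ (AdjoinRoot.root m)
    have hr : ψ (AdjoinRoot.root m) = α := AdjoinRoot.liftAlgHom_root _ _ _ _
    rw [← hr]
    exact this
  have hord : orderOf A = p ^ n - 1 := by rw [h1, ← h2, hα]
  refine ⟨?_, hord⟩
  have hpos : p ^ n - 1 ≠ 0 := by
    have h2le : 2 ≤ p := (Fact.out : p.Prime).two_le
    have : 2 ≤ p ^ n := le_trans h2le (Nat.le_self_pow (by omega) p)
    omega
  exact IsUnit.of_pow_eq_one (pow_orderOf_eq_one A) (hord ▸ hpos)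
end

section
/- Let p be a prime, n ≥ 3, F = GF(p), V = F^{n+1} with basis v₀, v₁, ..., v_n, U = span(v₁, ..., v_n), and W = Λ²V. Let f : V → W be the linear map whose matrix, with respect to the basis v₀,...,v_n of V and the basis of W ordered as v₀∧v₁, ..., v₀∧v_n, followed by the v_i∧v_j with 1 ≤ i < j ≤ n, is the block matrix [[b, c], [A, 0]] with b a 1×n row vector, c a nonzero 1×C(n,2) row vector, and A an invertible n×n matrix. If u ∈ U satisfies u ∧ w ∈ f(V) for all w ∈ V, then u = 0. -/
/-- The index type for the standard basis of the exterior square `Λ²V` of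
`V = F^(n+1)` with basis `v₀, v₁, …, v_n` (here `V = (Fin 1 ⊕ Fin n) → F`, with
`v₀` indexed by `Sum.inl 0` and `v_{j+1}` by `Sum.inr j`): `Sum.inl j` indexes
`v₀ ∧ v_{j+1}` (the first `n` basis vectors) and `Sum.inr ⟨(i,j), _⟩` indexes
`v_{i+1} ∧ v_{j+1}` for `i < j` (the remaining `C(n,2)` basis vectors), in the
ordering prescribed by the paper. -/
abbrev WIdx (n : ℕ) : Type := Fin n ⊕ {q : Fin n × Fin n // q.1 < q.2}

/-- The wedge product `V × V → Λ²V` of `V = F^(n+1)`, written in the coordinates of the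
standard bases described in `WIdx`. -/
def wedge {F : Type*} [CommRing F] {n : ℕ} (x y : (Fin 1 ⊕ Fin n) → F) :
    WIdx n → F :=
  Sum.elim
    (fun j => x (Sum.inl 0) * y (Sum.inr j) - x (Sum.inr j) * y (Sum.inl 0))
    (fun q => x (Sum.inr q.1.1) * y (Sum.inr q.1.2) - x (Sum.inr q.1.2) * y (Sum.inr q.1.1))

/-- Let `p` be a prime, `n ≥ 3`, `F = GF(p)`, `V = F^(n+1)` with basis
`v₀, …, v_n`, `U = span(v₁, …, v_n)` and `W = Λ²V`. Let `f : V → W` be the linear map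
whose matrix with respect to these bases is the block matrix `[[b, c], [A, 0]]` with `b` a
`1 × n` row vector, `c` a nonzero `1 × C(n,2)` row vector and `A` an invertible `n × n`
matrix. If `u ∈ U` satisfies `u ∧ w ∈ f(V)` for all `w ∈ V`, then `u = 0`. -/
theorem stmt7 (p n : ℕ) [Fact p.Prime] (hn : 3 ≤ n)
    (b : Matrix (Fin 1) (Fin n) (ZMod p))
    (c : Matrix (Fin 1) {q : Fin n × Fin n // q.1 < q.2} (ZMod p)) (hc : c ≠ 0)
    (A : Matrix (Fin n) (Fin n) (ZMod p)) (hA : IsUnit A)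
    (f : ((Fin 1 ⊕ Fin n) → ZMod p) →ₗ[ZMod p] (WIdx n → ZMod p))
    (hf : f = (Matrix.fromBlocks b c A 0).vecMulLinear)
    (U : Submodule (ZMod p) ((Fin 1 ⊕ Fin n) → ZMod p))
    (hU : U = Submodule.span (ZMod p)
      (Set.range fun i : Fin n => (Pi.single (Sum.inr i) 1 : (Fin 1 ⊕ Fin n) → ZMod p)))
    (u : (Fin 1 ⊕ Fin n) → ZMod p) (hu : u ∈ U)
    (hwedge : ∀ w : (Fin 1 ⊕ Fin n) → ZMod p, wedge u w ∈ LinearMap.range f) :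
    u = 0 := by
  by_contra hne
  subst hf hU
  -- u₀ = 0
  have hu0 : u (Sum.inl 0) = 0 := by
    have hle : Submodule.span (ZMod p)
        (Set.range fun i : Fin n => (Pi.single (Sum.inr i) 1 : (Fin 1 ⊕ Fin n) → ZMod p)) ≤
        LinearMap.ker (LinearMap.proj (Sum.inl 0) :
          ((Fin 1 ⊕ Fin n) → ZMod p) →ₗ[ZMod p] ZMod p) := by
      refine Submodule.span_le.mpr ?_
      rintro _ ⟨i, rfl⟩
      simp [LinearMap.mem_ker, Pi.single_apply]
    simpa using hle hu
  -- the key consequence of hwedge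
  have key : ∀ w : (Fin 1 ⊕ Fin n) → ZMod p, ∃ lam : ZMod p,
      ∀ q : {q : Fin n × Fin n // q.1 < q.2}, wedge u w (Sum.inr q) = lam * c 0 q := by
    intro w
    obtain ⟨x, hx⟩ := hwedge w
    refine ⟨x (Sum.inl 0), fun q => ?_⟩
    have h := congrFun hx (Sum.inr q)
    simp [Matrix.vecMulLinear_apply, Matrix.vecMul, dotProduct,
      Fintype.sum_sum_type, Matrix.fromBlocks] at h
    exact h.symm
  -- find a nonzero coordinate of u
  obtain ⟨t, ht⟩ : ∃ t, u t ≠ 0 := by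
    by_contra h; push_neg at h; exact hne (funext h)
  obtain ⟨i, hi⟩ : ∃ i : Fin n, u (Sum.inr i) ≠ 0 := by
    cases t with
    | inl a =>
      exact absurd (by rw [Subsingleton.elim a 0]; exact hu0) ht
    | inr i => exact ⟨i, ht⟩
  -- find j k distinct from i and each other
  obtain ⟨j, k, hj, hk, hjk⟩ : ∃ j k : Fin n, j ≠ i ∧ k ≠ i ∧ j ≠ k := by
    by_cases h1 : i = ⟨0, by omega⟩
    · exact ⟨⟨1, by omega⟩, ⟨2, by omega⟩,
        by simp [h1, Fin.ext_iff], by simp [h1, Fin.ext_iff], by simp [Fin.ext_iff]⟩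
    · by_cases h2 : i = ⟨1, by omega⟩
      · exact ⟨⟨0, by omega⟩, ⟨2, by omega⟩,
          by simp [h2, Fin.ext_iff], by simp [h2, Fin.ext_iff], by simp [Fin.ext_iff]⟩
      · refine ⟨⟨0, by omega⟩, ⟨1, by omega⟩, fun h => h1 h.symm, fun h => h2 h.symm,
          by simp [Fin.ext_iff]⟩
  -- for each m ≠ i, produce the sorted pair with a sign
  have pairq : ∀ m : Fin n, m ≠ i → ∃ (q : {q : Fin n × Fin n // q.1 < q.2}) (ε : ZMod p),
      ε ≠ 0 ∧ ∀ w : (Fin 1 ⊕ Fin n) → ZMod p,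
        wedge u w (Sum.inr q) =
          ε * (u (Sum.inr i) * w (Sum.inr m) - u (Sum.inr m) * w (Sum.inr i)) := by
    intro m hm
    rcases lt_or_gt_of_ne hm with h | h
    · refine ⟨⟨(m, i), h⟩, -1, by simp, fun w => ?_⟩
      simp only [wedge, Sum.elim_inr]
      ring
    · refine ⟨⟨(i, m), h⟩, 1, one_ne_zero, fun w => ?_⟩
      simp only [wedge, Sum.elim_inr]
      ring
  obtain ⟨qj, εj, hεj, hqj⟩ := pairq j hj
  obtain ⟨qk, εk, hεk, hqk⟩ := pairq k hk
  obtain ⟨lamj, hlamj⟩ := key (Pi.single (Sum.inr j) 1)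
  obtain ⟨lamk, hlamk⟩ := key (Pi.single (Sum.inr k) 1)
  have ej_j : (Pi.single (Sum.inr j) (1 : ZMod p) : (Fin 1 ⊕ Fin n) → ZMod p)
      (Sum.inr j) = 1 := by simp
  -- wedge u (e j) at qj equals εj * u_i
  have h1 : εj * u (Sum.inr i) = lamj * c 0 qj := by
    have := (hlamj qj).symm.trans (hqj (Pi.single (Sum.inr j) 1))
    rw [this]
    simp [Pi.single_apply, hj, (fun h => hj h.symm : i ≠ j)]
  -- wedge u (e k) at qk equals εk * u_i, hence c 0 qk ≠ 0
  have h3 : εk * u (Sum.inr i) = lamk * c 0 qk := by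
    have := (hlamk qk).symm.trans (hqk (Pi.single (Sum.inr k) 1))
    rw [this]
    simp [Pi.single_apply, hk, (fun h => hk h.symm : i ≠ k)]
  have hcqk : c 0 qk ≠ 0 := by
    intro h0
    rw [h0, mul_zero] at h3
    exact (mul_ne_zero hεk hi) h3
  -- wedge u (e j) at qk is zero
  have h2 : lamj * c 0 qk = 0 := by
    have := (hlamj qk).symm.trans (hqk (Pi.single (Sum.inr j) 1))
    rw [this]
    simp [Pi.single_apply, hjk, (fun h => hjk h.symm : k ≠ j),
      (fun h => hj h.symm : i ≠ j)]
    exact fun h => absurd h (Ne.symm hj)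
  have hlamj0 : lamj = 0 := by
    rcases mul_eq_zero.mp h2 with h | h
    · exact h
    · exact absurd h hcqk
  rw [hlamj0, zero_mul] at h1
  exact (mul_ne_zero hεj hi) h1
end

section
/- Let p be a prime, n ≥ 3, F = GF(p), V = F^{n+1} with basis v₀, v₁, ..., v_n, and W = Λ²V. Let f : V → W be the linear map whose matrix, with respect to the basis v₀,...,v_n of V and the basis of W ordered as v₀∧v₁, ..., v₀∧v_n, followed by the v_i∧v_j with 1 ≤ i < j ≤ n, is the block matrix [[b, c], [A, 0]] with b a 1×n row vector, c a nonzero 1×C(n,2) row vector, and A an invertible n×n matrix. Then span(v₀) = {x ∈ V : x ∧ w ∈ f(V) for all w ∈ V}. -/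
/-- Let `p` be a prime, `n ≥ 3`, `F = GF(p)`, `V = F^(n+1)` with basis
`v₀, …, v_n` and `W = Λ²V`. Let `f : V → W` be the linear map whose matrix with respect to
these bases is the block matrix `[[b, c], [A, 0]]` with `b` a `1 × n` row vector, `c` a
nonzero `1 × C(n,2)` row vector and `A` an invertible `n × n` matrix. Then
`span(v₀) = {x ∈ V : x ∧ w ∈ f(V) for all w ∈ V}`. -/
theorem stmt8 (p n : ℕ) [Fact p.Prime] (hn : 3 ≤ n)
    (b : Matrix (Fin 1) (Fin n) (ZMod p))
    (c : Matrix (Fin 1) {q : Fin n × Fin n // q.1 < q.2} (ZMod p)) (hc : c ≠ 0)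
    (A : Matrix (Fin n) (Fin n) (ZMod p)) (hA : IsUnit A)
    (f : ((Fin 1 ⊕ Fin n) → ZMod p) →ₗ[ZMod p] (WIdx n → ZMod p))
    (hf : f = (Matrix.fromBlocks b c A 0).vecMulLinear)
    (v₀ : (Fin 1 ⊕ Fin n) → ZMod p) (hv₀ : v₀ = Pi.single (Sum.inl 0) 1) :
    (Submodule.span (ZMod p) {v₀} : Set ((Fin 1 ⊕ Fin n) → ZMod p)) =
      {x | ∀ w : (Fin 1 ⊕ Fin n) → ZMod p, wedge x w ∈ LinearMap.range f} := by
  have hAdet : IsUnit A.det := (Matrix.isUnit_iff_isUnit_det A).mp hA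
  ext x
  simp only [SetLike.mem_coe, Submodule.mem_span_singleton, Set.mem_setOf_eq]
  constructor
  · rintro ⟨t, rfl⟩ w
    refine ⟨Sum.elim 0 (Matrix.vecMul (fun j => t * w (Sum.inr j)) A⁻¹), ?_⟩
    rw [hf, Matrix.vecMulLinear_apply, Matrix.vecMul_fromBlocks]
    ext q
    cases q with
    | inl j =>
      have : Matrix.vecMul (Matrix.vecMul (fun j => t * w (Sum.inr j)) A⁻¹) A = fun j => t * w (Sum.inr j) := by
        rw [Matrix.vecMul_vecMul, Matrix.nonsing_inv_mul A hAdet, Matrix.vecMul_one]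
      simp [wedge, hv₀, Matrix.vecMul, dotProduct, this,
        congrFun this j, Pi.single_apply]
    | inr q =>
      simp [wedge, hv₀, Matrix.vecMul, dotProduct, Pi.single_apply]
  · intro H
    set X : Fin n → ZMod p := fun r => x (Sum.inr r) with hX
    have key : ∀ j : Fin n, ∃ t : ZMod p,
        ∀ q : {q : Fin n × Fin n // q.1 < q.2},
          X q.1.1 * (Pi.single (Sum.inr j) (1:ZMod p) : (Fin 1 ⊕ Fin n) → ZMod p) (Sum.inr q.1.2)
            - X q.1.2 * (Pi.single (Sum.inr j) (1:ZMod p) : (Fin 1 ⊕ Fin n) → ZMod p) (Sum.inr q.1.1)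
            = t * c 0 q := by
      intro j
      obtain ⟨z, hz⟩ := H (Pi.single (Sum.inr j) 1)
      refine ⟨z (Sum.inl 0), fun q => ?_⟩
      have := congrFun hz (Sum.inr q)
      rw [hf, Matrix.vecMulLinear_apply, Matrix.vecMul_fromBlocks] at this
      simp only [Sum.elim_inr, Pi.add_apply, Matrix.vecMul, dotProduct,
        Matrix.zero_apply, mul_zero, Finset.sum_const_zero, add_zero,
        Fin.sum_univ_one, wedge] at this
      rw [← this]
      rfl
    have hX0 : ∀ i : Fin n, X i = 0 := by
      intro i
      by_contra hXi
      have hcard : 1 < ({i}ᶜ : Finset (Fin n)).card := by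
        rw [Finset.card_compl, Finset.card_singleton, Fintype.card_fin]
        omega
      obtain ⟨j, hj, k, hk, hjk⟩ := Finset.one_lt_card.mp hcard
      rw [Finset.mem_compl, Finset.mem_singleton] at hj hk
      have hij : i ≠ j := Ne.symm hj
      have hik : i ≠ k := Ne.symm hk
      have hji : j ≠ i := hj
      have hki : k ≠ i := hk
      have hkj : k ≠ j := Ne.symm hjk
      obtain ⟨tj, htj⟩ := key j
      obtain ⟨tk, htk⟩ := key k
      have htjne : tj ≠ 0 := by
        rcases lt_or_gt_of_ne hij with h | h
        · have e1 := htj ⟨(i, j), h⟩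
          simp [Pi.single_apply, hij, hji, hik, hki, hjk, hkj] at e1
          intro h0
          rw [h0, zero_mul] at e1
          exact hXi (by simpa using e1)
        · have e1 := htj ⟨(j, i), h⟩
          simp [Pi.single_apply, hij, hji, hik, hki, hjk, hkj] at e1
          intro h0
          rw [h0, zero_mul] at e1
          exact hXi (by simpa using e1)
      rcases lt_or_gt_of_ne hik with h | h
      · have e2 := htj ⟨(i, k), h⟩
        have e3 := htk ⟨(i, k), h⟩
        simp [Pi.single_apply, hij, hji, hik, hki, hjk, hkj] at e2 e3
        have hcq : c 0 ⟨(i, k), h⟩ = 0 :=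
          e2.resolve_left htjne
        rw [hcq, mul_zero] at e3
        exact hXi (by simpa using e3)
      · have e2 := htj ⟨(k, i), h⟩
        have e3 := htk ⟨(k, i), h⟩
        simp [Pi.single_apply, hij, hji, hik, hki, hjk, hkj] at e2 e3
        have hcq : c 0 ⟨(k, i), h⟩ = 0 :=
          e2.resolve_left htjne
        rw [hcq, mul_zero] at e3
        exact hXi (by simpa using e3)
    refine ⟨x (Sum.inl 0), ?_⟩
    ext q
    cases q with
    | inl r =>
      fin_cases r
      simp [hv₀, Pi.single_apply]
    | inr r =>
      simpa [hv₀, Pi.single_apply] using (hX0 r).symm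
end

section
/- Let p be a prime, n ≥ 3, F = GF(p), V = F^{n+1} with basis v₀, v₁, ..., v_n, and W = Λ²V. Let f : V → W be the linear map whose matrix, with respect to the basis v₀,...,v_n of V and the basis of W ordered as v₀∧v₁, ..., v₀∧v_n, followed by the v_i∧v_j with 1 ≤ i < j ≤ n, is the block matrix [[b, c], [A, 0]] with b a 1×n row vector, c a nonzero 1×C(n,2) row vector, and A an invertible n×n matrix. If g ∈ GL(V) satisfies f(g(v)) = (Λ²g)(f(v)) for all v ∈ V, then g maps the line span(v₀) to itself. -/
/-- Inclusion of `F^n` into `F^(1+n)` with first coordinate `0`. -/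
def Jmap (F : Type*) [Field F] (n : ℕ) : (Fin n → F) →ₗ[F] ((Fin 1 ⊕ Fin n) → F) where
  toFun z := Sum.elim 0 z
  map_add' x y := by funext s; cases s <;> simp
  map_smul' a x := by funext s; cases s <;> simp

lemma Jmap_inl {F : Type*} [Field F] {n : ℕ} (z : Fin n → F) (i : Fin 1) :
    Jmap F n z (Sum.inl i) = 0 := rfl

lemma Jmap_inr {F : Type*} [Field F] {n : ℕ} (z : Fin n → F) (k : Fin n) :
    Jmap F n z (Sum.inr k) = z k := rfl

lemma aux_contra {F : Type*} [Field F] {n : ℕ}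
    (g : ((Fin 1 ⊕ Fin n) → F) ≃ₗ[F] ((Fin 1 ⊕ Fin n) → F))
    (v₀ : (Fin 1 ⊕ Fin n) → F) (hv₀ : v₀ = Pi.single (Sum.inl 0) 1)
    (i0 : Fin n) (hu : g v₀ (Sum.inr i0) ≠ 0)
    (y1 y2 : Fin n → F)
    (h1 : ∀ j, g v₀ (Sum.inr i0) * g (Jmap F n y1) (Sum.inr j)
        = g v₀ (Sum.inr j) * g (Jmap F n y1) (Sum.inr i0))
    (h2 : ∀ j, g v₀ (Sum.inr i0) * g (Jmap F n y2) (Sum.inr j)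
        = g v₀ (Sum.inr j) * g (Jmap F n y2) (Sum.inr i0))
    (hindep : ∀ l1 l2 : F, l1 • y1 + l2 • y2 = 0 → l1 = 0 ∧ l2 = 0) :
    False := by
  classical
  have hni : ¬ LinearIndependent F
      (![![g v₀ (Sum.inl 0), g v₀ (Sum.inr i0)],
         ![g (Jmap F n y1) (Sum.inl 0), g (Jmap F n y1) (Sum.inr i0)],
         ![g (Jmap F n y2) (Sum.inl 0), g (Jmap F n y2) (Sum.inr i0)]]) := by
    intro h
    have h2 := h.fintype_card_le_finrank
    simp at h2
  obtain ⟨l, hl, i, hi⟩ := Fintype.not_linearIndependent_iff.mp hni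
  rw [Fin.sum_univ_three] at hl
  have hl0 : l 0 * g v₀ (Sum.inl 0) + l 1 * g (Jmap F n y1) (Sum.inl 0)
      + l 2 * g (Jmap F n y2) (Sum.inl 0) = 0 := by
    have := congrFun hl 0
    simpa using this
  have hl1 : l 0 * g v₀ (Sum.inr i0) + l 1 * g (Jmap F n y1) (Sum.inr i0)
      + l 2 * g (Jmap F n y2) (Sum.inr i0) = 0 := by
    have := congrFun hl 1
    simpa using this
  have hgt : ∀ s, g (l 0 • v₀ + l 1 • Jmap F n y1 + l 2 • Jmap F n y2) s
      = l 0 * g v₀ s + l 1 * g (Jmap F n y1) s + l 2 * g (Jmap F n y2) s := by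
    intro s
    simp [map_add, map_smul]
  have e0 : g (l 0 • v₀ + l 1 • Jmap F n y1 + l 2 • Jmap F n y2) (Sum.inl 0) = 0 := by
    rw [hgt]; exact hl0
  have e1 : g (l 0 • v₀ + l 1 • Jmap F n y1 + l 2 • Jmap F n y2) (Sum.inr i0) = 0 := by
    rw [hgt]; exact hl1
  have ej : ∀ j, g (l 0 • v₀ + l 1 • Jmap F n y1 + l 2 • Jmap F n y2) (Sum.inr j) = 0 := by
    intro j
    have hP : g v₀ (Sum.inr i0) * g (l 0 • v₀ + l 1 • Jmap F n y1 + l 2 • Jmap F n y2) (Sum.inr j)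
        = g v₀ (Sum.inr j) * g (l 0 • v₀ + l 1 • Jmap F n y1 + l 2 • Jmap F n y2) (Sum.inr i0) := by
      rw [hgt, hgt]
      linear_combination (l 1) * (h1 j) + (l 2) * (h2 j)
    rw [e1, mul_zero] at hP
    exact (mul_eq_zero.mp hP).resolve_left hu
  have gt0 : g (l 0 • v₀ + l 1 • Jmap F n y1 + l 2 • Jmap F n y2) = 0 := by
    funext s
    cases s with
    | inl i =>
      have hi1 : i = 0 := Subsingleton.elim _ _
      rw [hi1]; exact e0
    | inr j => exact ej j
  have t0 : l 0 • v₀ + l 1 • Jmap F n y1 + l 2 • Jmap F n y2 = 0 :=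
    (LinearEquiv.map_eq_zero_iff g).mp gt0
  have hl0' : l 0 = 0 := by
    have := congrFun t0 (Sum.inl 0)
    simpa [hv₀, Jmap_inl] using this
  have h12 : l 1 • y1 + l 2 • y2 = 0 := by
    funext k
    have := congrFun t0 (Sum.inr k)
    simpa [hv₀, Jmap_inr, hl0', Pi.single_apply] using this
  obtain ⟨hA1, hA2⟩ := hindep _ _ h12
  fin_cases i
  · exact hi hl0'
  · exact hi hA1
  · exact hi hA2

/-- Let `p` be a prime, `n ≥ 3`, `F = GF(p)`, `V = F^(n+1)` with basis
`v₀, …, v_n` and `W = Λ²V`. Let `f : V → W` be the linear map whose matrix with respect to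
these bases is the block matrix `[[b, c], [A, 0]]` with `b` a `1 × n` row vector, `c` a
nonzero `1 × C(n,2)` row vector and `A` an invertible `n × n` matrix. If `g ∈ GL(V)`
satisfies `f(g(v)) = (Λ²g)(f(v))` for all `v ∈ V` — where `Λ²g` is the (unique) linear
map on `W` with `(Λ²g)(x ∧ y) = g(x) ∧ g(y)` — then `g` maps the line `span(v₀)` to
itself. -/
theorem stmt9 (p n : ℕ) [Fact p.Prime] (hn : 3 ≤ n)
    (b : Matrix (Fin 1) (Fin n) (ZMod p))
    (c : Matrix (Fin 1) {q : Fin n × Fin n // q.1 < q.2} (ZMod p)) (hc : c ≠ 0)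
    (A : Matrix (Fin n) (Fin n) (ZMod p)) (hA : IsUnit A)
    (f : ((Fin 1 ⊕ Fin n) → ZMod p) →ₗ[ZMod p] (WIdx n → ZMod p))
    (hf : f = (Matrix.fromBlocks b c A 0).vecMulLinear)
    (v₀ : (Fin 1 ⊕ Fin n) → ZMod p) (hv₀ : v₀ = Pi.single (Sum.inl 0) 1)
    (g : ((Fin 1 ⊕ Fin n) → ZMod p) ≃ₗ[ZMod p] ((Fin 1 ⊕ Fin n) → ZMod p))
    (g2 : (WIdx n → ZMod p) →ₗ[ZMod p] (WIdx n → ZMod p))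
    (hg2 : ∀ x y : (Fin 1 ⊕ Fin n) → ZMod p, g2 (wedge x y) = wedge (g x) (g y))
    (hcomm : ∀ v : (Fin 1 ⊕ Fin n) → ZMod p, f (g v) = g2 (f v)) :
    Submodule.map (g : ((Fin 1 ⊕ Fin n) → ZMod p) →ₗ[ZMod p] ((Fin 1 ⊕ Fin n) → ZMod p))
        (Submodule.span (ZMod p) {v₀}) =
      Submodule.span (ZMod p) {v₀} := by
  classical
  have hf_inr : ∀ (x : (Fin 1 ⊕ Fin n) → ZMod p) (q : {q : Fin n × Fin n // q.1 < q.2}),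
      f x (Sum.inr q) = x (Sum.inl 0) * c 0 q := by
    intro x q
    simp [hf, Matrix.vecMulLinear_apply, Matrix.vecMul, dotProduct,
      Fintype.sum_sum_type]
  have hf_inl : ∀ (x : (Fin 1 ⊕ Fin n) → ZMod p) (j : Fin n),
      f x (Sum.inl j) = x (Sum.inl 0) * b 0 j + ∑ k, x (Sum.inr k) * A k j := by
    intro x j
    simp [hf, Matrix.vecMulLinear_apply, Matrix.vecMul, dotProduct,
      Fintype.sum_sum_type]
  by_cases hu0 : ∀ j, g v₀ (Sum.inr j) = 0
  · -- `g v₀` is a scalar multiple of `v₀`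
    have hα : g v₀ = (g v₀ (Sum.inl 0)) • v₀ := by
      funext s
      cases s with
      | inl i =>
        have hi1 : i = 0 := Subsingleton.elim _ _
        have h1 : v₀ (Sum.inl 0) = 1 := by rw [hv₀]; exact Pi.single_eq_same _ _
        rw [hi1, Pi.smul_apply, h1, smul_eq_mul, mul_one]
      | inr j =>
        have h1 : v₀ (Sum.inr j) = 0 := by
          rw [hv₀]; exact Pi.single_eq_of_ne (by simp) _
        rw [hu0 j, Pi.smul_apply, h1, smul_eq_mul, mul_zero]
    have hne : g v₀ (Sum.inl 0) ≠ 0 := by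
      intro h
      have hz : g v₀ = 0 := by rw [hα, h, zero_smul]
      have hz2 : v₀ = 0 := (LinearEquiv.map_eq_zero_iff g).mp hz
      have := congrFun hz2 (Sum.inl 0)
      simp [hv₀] at this
    rw [Submodule.map_span, Set.image_singleton]
    simp only [LinearEquiv.coe_coe]
    rw [hα]
    exact Submodule.span_singleton_smul_eq (IsUnit.mk0 _ hne) _
  · push_neg at hu0
    obtain ⟨i0, hi0⟩ := hu0
    exfalso
    have hAd : IsUnit A.det := (Matrix.isUnit_iff_isUnit_det A).mp hA
    have hy' : ∀ (y : Fin n → ZMod p) (j : Fin n),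
        ∑ k, (Matrix.vecMul y A⁻¹) k * A k j = y j := by
      intro y j
      have hy : Matrix.vecMul (Matrix.vecMul y A⁻¹) A = y := by
        rw [Matrix.vecMul_vecMul, Matrix.nonsing_inv_mul _ hAd, Matrix.vecMul_one]
      have := congrFun hy j
      simpa [Matrix.vecMul, dotProduct] using this
    set γ : (Fin n → ZMod p) →ₗ[ZMod p] (ZMod p) :=
      (LinearMap.proj (Sum.inl 0)) ∘ₗ
        (g : ((Fin 1 ⊕ Fin n) → ZMod p) →ₗ[ZMod p] ((Fin 1 ⊕ Fin n) → ZMod p))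
        ∘ₗ (Jmap (ZMod p) n) ∘ₗ (Matrix.vecMulLinear A⁻¹) with hγdef
    have hγa : ∀ y, γ y = g (Jmap (ZMod p) n (Matrix.vecMul y A⁻¹)) (Sum.inl 0) := by
      intro y
      simp [hγdef, Matrix.vecMulLinear_apply]
    have key : ∀ (y : Fin n → ZMod p) (q : {q : Fin n × Fin n // q.1 < q.2}),
        γ y * c 0 q
          = g v₀ (Sum.inr q.1.1) * g (Jmap (ZMod p) n y) (Sum.inr q.1.2)
            - g v₀ (Sum.inr q.1.2) * g (Jmap (ZMod p) n y) (Sum.inr q.1.1) := by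
      intro y q
      have hfv : f (Jmap (ZMod p) n (Matrix.vecMul y A⁻¹)) = wedge v₀ (Jmap (ZMod p) n y) := by
        funext s
        cases s with
        | inl j =>
          rw [hf_inl]
          simp only [Jmap_inl, Jmap_inr, zero_mul, zero_add, hy' y j]
          simp [wedge, hv₀, Jmap_inl, Jmap_inr, Pi.single_apply]
        | inr q' =>
          rw [hf_inr]
          simp [wedge, hv₀, Jmap_inl, Jmap_inr, Pi.single_apply]
      have h2 := hcomm (Jmap (ZMod p) n (Matrix.vecMul y A⁻¹))
      rw [hfv, hg2] at h2
      have h3 := congrFun h2 (Sum.inr q)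
      rw [hf_inr] at h3
      rw [hγa]
      simpa [wedge] using h3
    have hP : ∀ y : Fin n → ZMod p, γ y = 0 →
        ∀ j, g v₀ (Sum.inr i0) * g (Jmap (ZMod p) n y) (Sum.inr j)
          = g v₀ (Sum.inr j) * g (Jmap (ZMod p) n y) (Sum.inr i0) := by
      intro y hy j
      rcases lt_trichotomy i0 j with h | h | h
      · have hk := key y ⟨(i0, j), h⟩
        rw [hy, zero_mul] at hk
        exact sub_eq_zero.mp hk.symm
      · rw [h]
      · have hk := key y ⟨(j, i0), h⟩
        rw [hy, zero_mul] at hk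
        linear_combination hk
    by_cases hγ0 : ∀ k, γ (Pi.single k 1) = 0
    · set j1 : Fin n := ⟨0, by omega⟩ with hj1def
      set j2 : Fin n := ⟨1, by omega⟩ with hj2def
      refine aux_contra g v₀ hv₀ i0 hi0 (Pi.single j1 1) (Pi.single j2 1)
        (hP _ (hγ0 j1)) (hP _ (hγ0 j2)) ?_
      intro l1 l2 hl
      have hne : j1 ≠ j2 := by simp [hj1def, hj2def, Fin.ext_iff]
      constructor
      · have := congrFun hl j1
        simpa [Pi.single_apply, hne] using this
      · have := congrFun hl j2
        simpa [Pi.single_apply, hne.symm] using this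
    · push_neg at hγ0
      obtain ⟨k0, hk0⟩ := hγ0
      obtain ⟨m1, m2, hm1, hm2, hm12, hmk1, hmk2⟩ :
          ∃ m1 m2 : ℕ, m1 < n ∧ m2 < n ∧ m1 ≠ m2 ∧ m1 ≠ (k0 : ℕ) ∧ m2 ≠ (k0 : ℕ) := by
        have := k0.2
        by_cases h : (k0 : ℕ) = 0
        · exact ⟨1, 2, by omega⟩
        · by_cases h2 : (k0 : ℕ) = 1
          · exact ⟨0, 2, by omega⟩
          · exact ⟨0, 1, by omega⟩
      set j1 : Fin n := ⟨m1, hm1⟩ with hj1def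
      set j2 : Fin n := ⟨m2, hm2⟩ with hj2def
      have hj12 : j1 ≠ j2 := by simp [hj1def, hj2def, Fin.ext_iff]; omega
      have hj1k : j1 ≠ k0 := by simp [hj1def, Fin.ext_iff]; omega
      have hj2k : j2 ≠ k0 := by simp [hj2def, Fin.ext_iff]; omega
      have hγy1 : γ (γ (Pi.single k0 1) • (Pi.single j1 1 : Fin n → ZMod p)
          - γ (Pi.single j1 1) • (Pi.single k0 1 : Fin n → ZMod p)) = 0 := by
        simp [map_sub, map_smul, smul_eq_mul, mul_comm]
      have hγy2 : γ (γ (Pi.single k0 1) • (Pi.single j2 1 : Fin n → ZMod p)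
          - γ (Pi.single j2 1) • (Pi.single k0 1 : Fin n → ZMod p)) = 0 := by
        simp [map_sub, map_smul, smul_eq_mul, mul_comm]
      refine aux_contra g v₀ hv₀ i0 hi0 _ _ (hP _ hγy1) (hP _ hγy2) ?_
      intro l1 l2 hl
      have e1 : l1 * γ (Pi.single k0 1) = 0 := by
        have := congrFun hl j1
        simpa [Pi.single_apply, hj12, hj1k, hj12.symm, hj2k] using this
      have e2 : l2 * γ (Pi.single k0 1) = 0 := by
        have := congrFun hl j2
        simpa [Pi.single_apply, hj12, hj12.symm, hj1k, hj2k] using this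
      exact ⟨(mul_eq_zero.mp e1).resolve_right hk0, (mul_eq_zero.mp e2).resolve_right hk0⟩
end

section
/- Let p be a prime, n ≥ 3, F = GF(p), V = F^{n+1} with basis v₀, v₁, ..., v_n, U = span(v₁, ..., v_n), and W = Λ²V. Let f : V → W be the linear map whose matrix, with respect to the basis v₀,...,v_n of V and the basis of W ordered as v₀∧v₁, ..., v₀∧v_n, followed by the v_i∧v_j with 1 ≤ i < j ≤ n, is the block matrix [[b, c], [A, 0]] with b a 1×n row vector, c a nonzero 1×C(n,2) row vector, and A an invertible n×n matrix. If g ∈ GL(V) satisfies f(g(v)) = (Λ²g)(f(v)) for all v ∈ V, then g maps the subspace U to itself. -/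
/-- Let `p` be a prime, `n ≥ 3`, `F = GF(p)`, `V = F^(n+1)` with basis
`v₀, …, v_n`, `U = span(v₁, …, v_n)` and `W = Λ²V`. Let `f : V → W` be the linear map
whose matrix with respect to these bases is the block matrix `[[b, c], [A, 0]]` with `b` a
`1 × n` row vector, `c` a nonzero `1 × C(n,2)` row vector and `A` an invertible `n × n`
matrix. If `g ∈ GL(V)` satisfies `f(g(v)) = (Λ²g)(f(v))` for all `v ∈ V` — where `Λ²g` is
the (unique) linear map on `W` with `(Λ²g)(x ∧ y) = g(x) ∧ g(y)` — then `g` maps the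
subspace `U` to itself. -/
theorem stmt11 (p n : ℕ) [Fact p.Prime] (hn : 3 ≤ n)
    (b : Matrix (Fin 1) (Fin n) (ZMod p))
    (c : Matrix (Fin 1) {q : Fin n × Fin n // q.1 < q.2} (ZMod p)) (hc : c ≠ 0)
    (A : Matrix (Fin n) (Fin n) (ZMod p)) (hA : IsUnit A)
    (f : ((Fin 1 ⊕ Fin n) → ZMod p) →ₗ[ZMod p] (WIdx n → ZMod p))
    (hf : f = (Matrix.fromBlocks b c A 0).vecMulLinear)
    (U : Submodule (ZMod p) ((Fin 1 ⊕ Fin n) → ZMod p))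
    (hU : U = Submodule.span (ZMod p)
      (Set.range fun i : Fin n => (Pi.single (Sum.inr i) 1 : (Fin 1 ⊕ Fin n) → ZMod p)))
    (g : ((Fin 1 ⊕ Fin n) → ZMod p) ≃ₗ[ZMod p] ((Fin 1 ⊕ Fin n) → ZMod p))
    (g2 : (WIdx n → ZMod p) →ₗ[ZMod p] (WIdx n → ZMod p))
    (hg2 : ∀ x y : (Fin 1 ⊕ Fin n) → ZMod p, g2 (wedge x y) = wedge (g x) (g y))
    (hcomm : ∀ v : (Fin 1 ⊕ Fin n) → ZMod p, f (g v) = g2 (f v)) :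
    Submodule.map (g : ((Fin 1 ⊕ Fin n) → ZMod p) →ₗ[ZMod p] ((Fin 1 ⊕ Fin n) → ZMod p))
        U = U := by
  classical
  -- the embedding of F^n into V as the last n coordinates
  set emb : (Fin n → ZMod p) → ((Fin 1 ⊕ Fin n) → ZMod p) :=
    fun u => Sum.elim 0 u with hemb
  have hemb_add : ∀ u v : Fin n → ZMod p, emb (u + v) = emb u + emb v := by
    intro u v; funext x; cases x <;> simp [hemb]
  have hemb_smul : ∀ (t : ZMod p) (u : Fin n → ZMod p), emb (t • u) = t • emb u := by
    intro t u; funext x; cases x <;> simp [hemb]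
  set e0 : (Fin 1 ⊕ Fin n) → ZMod p := Sum.elim 1 0 with he0
  set a : (Fin 1 ⊕ Fin n) → ZMod p := g e0 with ha
  -- delta and gamma : components of g restricted to U
  set dlt : (Fin n → ZMod p) → ZMod p := fun u => g (emb u) (Sum.inl 0) with hdlt
  set gam : (Fin n → ZMod p) → (Fin n → ZMod p) :=
    fun u i => g (emb u) (Sum.inr i) with hgam
  set M : Matrix (Fin 1 ⊕ Fin n) (WIdx n) (ZMod p) := Matrix.fromBlocks b c A 0 with hM
  -- applying f pointwise
  have hfapp : ∀ (x : (Fin 1 ⊕ Fin n) → ZMod p) (idx : WIdx n),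
      f x idx = x (Sum.inl 0) * M (Sum.inl 0) idx
        + ∑ i : Fin n, x (Sum.inr i) * M (Sum.inr i) idx := by
    intro x idx
    rw [hf]
    simp [Matrix.vecMulLinear_apply, Matrix.vecMul, dotProduct,
      Fintype.sum_sum_type]
  -- f on U gives wedges with e0
  have hfemb : ∀ u : Fin n → ZMod p, f (emb u) = wedge e0 (emb (Matrix.vecMul u A)) := by
    intro u
    funext idx
    rw [hfapp]
    cases idx with
    | inl j =>
      simp [wedge, hemb, he0, hM, Matrix.vecMul, dotProduct]
    | inr q =>
      simp [wedge, hemb, he0, hM]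
  have key : ∀ u : Fin n → ZMod p,
      f (g (emb u)) = wedge a (g (emb (Matrix.vecMul u A))) := by
    intro u
    rw [hcomm, hfemb, hg2, ha]
  -- Relation R (the inr block)
  have R : ∀ (u : Fin n → ZMod p) (q : {q : Fin n × Fin n // q.1 < q.2}),
      dlt u * c 0 q
        = a (Sum.inr q.1.1) * gam (Matrix.vecMul u A) q.1.2
          - a (Sum.inr q.1.2) * gam (Matrix.vecMul u A) q.1.1 := by
    intro u q
    have h := congrFun (key u) (Sum.inr q)
    rw [hfapp] at h
    simpa [wedge, hgam, hdlt, hM] using h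
  -- Relation S (the inl block)
  have S : ∀ (u : Fin n → ZMod p) (j : Fin n),
      dlt u * b 0 j + ∑ i : Fin n, gam u i * A i j
        = a (Sum.inl 0) * gam (Matrix.vecMul u A) j
          - a (Sum.inr j) * dlt (Matrix.vecMul u A) := by
    intro u j
    have h := congrFun (key u) (Sum.inl j)
    rw [hfapp] at h
    simpa [wedge, hgam, hdlt, hM] using h
  -- A is invertible: vecMul is injective
  have hAdet : IsUnit A.det := (Matrix.isUnit_iff_isUnit_det A).mp hA
  have hAinv : ∀ v : Fin n → ZMod p, Matrix.vecMul v A = 0 → v = 0 := by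
    intro v hv
    have : Matrix.vecMul (Matrix.vecMul v A) A⁻¹ = Matrix.vecMul v (A * A⁻¹) := by
      rw [Matrix.vecMul_vecMul]
    rw [hv, Matrix.zero_vecMul, Matrix.mul_nonsing_inv A hAdet, Matrix.vecMul_one] at this
    exact this.symm
  -- g (emb u) = 0 forces u = 0
  have hgemb0 : ∀ u : Fin n → ZMod p, dlt u = 0 → gam u = 0 → u = 0 := by
    intro u h1 h2
    have hz : g (emb u) = 0 := by
      funext x
      cases x with
      | inl k =>
        have : k = 0 := Subsingleton.elim _ _
        subst this
        simpa [hdlt] using h1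
      | inr i => simpa [hgam] using congrFun h2 i
    have : emb u = 0 := by
      have := g.injective (by simpa using hz)
      simpa using this
    funext i
    simpa [hemb] using congrFun this (Sum.inr i)
  -- MAIN CLAIM: dlt vanishes identically
  have hdelta0 : ∀ u : Fin n → ZMod p, dlt u = 0 := by
    by_contra hcon
    push_neg at hcon
    obtain ⟨u₀, hu₀⟩ := hcon
    -- Step 1: the inr-part of a is nonzero
    have ha' : ∃ j : Fin n, a (Sum.inr j) ≠ 0 := by
      by_contra h'
      push_neg at h'
      apply hc
      ext k q
      have hR := R u₀ q
      rw [h', h'] at hR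
      have : dlt u₀ * c 0 q = 0 := by rw [hR]; ring
      have hcq : c 0 q = 0 := by
        rcases mul_eq_zero.mp this with h | h
        · exact absurd h hu₀
        · exact h
      have : k = 0 := Subsingleton.elim _ _
      subst this
      simpa using hcq
    obtain ⟨j₀, hj₀⟩ := ha'
    -- Step 2: for u in ker dlt, (gam u) ᵥ* A lies on the line spanned by a'
    have hker : ∀ u : Fin n → ZMod p, dlt u = 0 →
        ∃ s : ZMod p, ∀ j, (∑ i : Fin n, gam u i * A i j) = s * a (Sum.inr j) := by
      intro u hu
      have hprop : ∀ i j : Fin n,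
          a (Sum.inr i) * gam (Matrix.vecMul u A) j
            = a (Sum.inr j) * gam (Matrix.vecMul u A) i := by
        intro i j
        rcases lt_trichotomy i j with h | h | h
        · have hR := R u ⟨(i, j), h⟩
          rw [hu] at hR
          simp only [zero_mul] at hR
          linear_combination -hR
        · subst h; ring
        · have hR := R u ⟨(j, i), h⟩
          rw [hu] at hR
          simp only [zero_mul] at hR
          linear_combination hR
      -- fix the coefficient
      set t : ZMod p := gam (Matrix.vecMul u A) j₀ * (a (Sum.inr j₀))⁻¹ with ht
      have hgamuA : ∀ j, gam (Matrix.vecMul u A) j = t * a (Sum.inr j) := by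
        intro j
        have h := hprop j₀ j
        rw [ht]
        field_simp
        linear_combination h
      refine ⟨a (Sum.inl 0) * t - dlt (Matrix.vecMul u A), fun j => ?_⟩
      have hS := S u j
      rw [hu, hgamuA j] at hS
      linear_combination hS
    -- Step 3: two linearly independent vectors in ker dlt
    set dltL : (Fin n → ZMod p) →ₗ[ZMod p] ZMod p :=
      { toFun := dlt
        map_add' := fun u v => by simp [hdlt, hemb_add]
        map_smul' := fun t u => by simp [hdlt, hemb_smul] } with hdltL
    have hrank : 2 ≤ Module.finrank (ZMod p) (LinearMap.ker dltL) := by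
      have hrn := LinearMap.finrank_range_add_finrank_ker dltL
      have h1 : Module.finrank (ZMod p) (Fin n → ZMod p) = n := by
        simp [Module.finrank_pi]
      have h2 : Module.finrank (ZMod p) (LinearMap.range dltL) ≤ 1 := by
        have := Submodule.finrank_le (LinearMap.range dltL)
        simpa [Module.finrank_self] using this
      omega
    obtain ⟨w, hw⟩ := exists_linearIndependent_of_le_finrank hrank
    have hw' : LinearIndependent (ZMod p)
        (fun i : Fin 2 => ((w i : Fin n → ZMod p))) := by
      have := hw.map' (LinearMap.ker dltL).subtype (Submodule.ker_subtype _)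
      exact this
    set u := (w 0 : Fin n → ZMod p) with hu_def
    set v := (w 1 : Fin n → ZMod p) with hv_def
    have hu0 : dlt u = 0 := (w 0).2
    have hv0 : dlt v = 0 := (w 1).2
    obtain ⟨su, hsu⟩ := hker u hu0
    obtain ⟨sv, hsv⟩ := hker v hv0
    -- z := sv • u - su • v satisfies g (emb z) = 0
    set z : Fin n → ZMod p := sv • u - su • v with hz
    have hembz : emb z = sv • emb u - su • emb v := by
      funext x; cases x <;> simp [hemb, hz]
    have hdltz : dlt z = 0 := by
      show g (emb z) (Sum.inl 0) = 0
      rw [hembz, map_sub, map_smul, map_smul]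
      simp only [Pi.sub_apply, Pi.smul_apply, smul_eq_mul]
      have e1 : g (emb u) (Sum.inl 0) = 0 := hu0
      have e2 : g (emb v) (Sum.inl 0) = 0 := hv0
      rw [e1, e2]; ring
    have hgamz : ∀ i, gam z i = sv * gam u i - su * gam v i := by
      intro i
      show g (emb z) (Sum.inr i) = sv * gam u i - su * gam v i
      rw [hembz, map_sub, map_smul, map_smul]
      simp only [Pi.sub_apply, Pi.smul_apply, smul_eq_mul]
      rfl
    have hgamzA : Matrix.vecMul (gam z) A = 0 := by
      funext j
      have : (∑ i : Fin n, gam z i * A i j)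
          = sv * (∑ i : Fin n, gam u i * A i j) - su * (∑ i : Fin n, gam v i * A i j) := by
        rw [Finset.mul_sum, Finset.mul_sum, ← Finset.sum_sub_distrib]
        refine Finset.sum_congr rfl fun i _ => ?_
        rw [hgamz i]; ring
      rw [hsu, hsv] at this
      have h0 : (∑ i : Fin n, gam z i * A i j) = 0 := by rw [this]; ring
      simpa [Matrix.vecMul, dotProduct] using h0
    have hgamz0 : gam z = 0 := hAinv _ hgamzA
    have hz0 : z = 0 := hgemb0 z hdltz hgamz0
    -- linear independence kills the coefficients
    have hcoef : sv = 0 ∧ su = 0 := by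
      have hli := Fintype.linearIndependent_iff.mp hw'
      have := hli ![sv, -su] ?_
      · exact ⟨this 0, by simpa using (neg_eq_zero.mp (this 1))⟩
      · have : (sv • u + (-su) • v) = z := by rw [hz]; module
        calc ∑ i : Fin 2, (![sv, -su] i) • ((w i : Fin n → ZMod p))
            = sv • u + (-su) • v := by
              simp [Fin.sum_univ_two, hu_def, hv_def]
          _ = z := this
          _ = 0 := hz0
    -- then gam u ᵥ* A = 0, so u = 0, contradicting independence
    have hgamuA : Matrix.vecMul (gam u) A = 0 := by
      funext j
      have := hsu j
      rw [hcoef.2] at this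
      simpa [Matrix.vecMul, dotProduct] using this
    have hgamu0 : gam u = 0 := hAinv _ hgamuA
    have : u = 0 := hgemb0 u hu0 hgamu0
    exact hw'.ne_zero 0 (by simpa [hu_def] using this)
  -- membership in U is vanishing of the first coordinate
  have hUmem : ∀ x : (Fin 1 ⊕ Fin n) → ZMod p, x ∈ U ↔ x (Sum.inl 0) = 0 := by
    intro x
    constructor
    · intro hx
      rw [hU] at hx
      induction hx using Submodule.span_induction with
      | mem y hy =>
        obtain ⟨i, rfl⟩ := hy
        simp [Pi.single_apply]
      | zero => simp
      | add y z _ _ h1 h2 => simp [h1, h2]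
      | smul t y _ h => simp [h]
    · intro hx
      rw [hU]
      have hrepr : x = ∑ i : Fin n,
          x (Sum.inr i) • (Pi.single (Sum.inr i) 1 : (Fin 1 ⊕ Fin n) → ZMod p) := by
        funext idx
        rw [Finset.sum_apply]
        cases idx with
        | inl j =>
          have : j = 0 := Subsingleton.elim _ _
          subst this
          simp [Pi.single_apply, hx]
        | inr k =>
          simp [Pi.single_apply]
      rw [hrepr]
      exact Submodule.sum_mem _ fun i _ =>
        Submodule.smul_mem _ _ (Submodule.subset_span ⟨i, rfl⟩)
  -- g maps U into U
  have hle : Submodule.map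
      (g : ((Fin 1 ⊕ Fin n) → ZMod p) →ₗ[ZMod p] ((Fin 1 ⊕ Fin n) → ZMod p)) U ≤ U := by
    intro y hy
    obtain ⟨x, hx, rfl⟩ := Submodule.mem_map.mp hy
    rw [hUmem] at hx ⊢
    have hxe : x = emb (fun i => x (Sum.inr i)) := by
      funext idx
      cases idx with
      | inl j =>
        have : j = 0 := Subsingleton.elim _ _
        subst this
        simp [hemb, hx]
      | inr k => simp [hemb]
    have h0 : g (emb (fun i => x (Sum.inr i))) (Sum.inl 0) = 0 := hdelta0 _
    rw [← hxe] at h0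
    exact h0
  -- conclude by dimension count
  refine Submodule.eq_of_le_of_finrank_le hle ?_
  rw [LinearEquiv.finrank_map_eq]
end

section
/- Let p be a prime, n ≥ 3, F = GF(p), V = F^{n+1} with basis v₀, v₁, ..., v_n, and W = Λ²V. Let α be a primitive element of GF(p^n), m its minimal polynomial over F, and A the n×n companion matrix of m. Let f : V → W be the linear map whose matrix, with respect to the basis v₀,...,v_n of V and the basis of W ordered as v₀∧v₁, ..., v₀∧v_n, followed by the v_i∧v_j with 1 ≤ i < j ≤ n, is the block matrix [[b, c], [A, 0]] with b a nonzero 1×n row vector and c a nonzero 1×C(n,2) row vector. Then the group G = {g ∈ GL(V) : f(g(v)) = (Λ²g)(f(v)) for all v ∈ V} is trivial: its only element is the identity. -/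
open Polynomial Matrix Module

section Aux

/-- The natural map `F^n → F^(n+1)` onto the last `n` coordinates. -/
private def iotaL (R : Type*) [CommRing R] (n : ℕ) :
    (Fin n → R) →ₗ[R] ((Fin 1 ⊕ Fin n) → R) where
  toFun x := Sum.elim (fun _ => (0 : R)) x
  map_add' x y := by funext i; cases i <;> simp
  map_smul' t x := by funext i; cases i <;> simp

/-- The first basis vector of `F^(n+1)`. -/
private def e0V (R : Type*) [CommRing R] (n : ℕ) : (Fin 1 ⊕ Fin n) → R :=
  Sum.elim (fun _ => 1) (fun _ => 0)

private lemma iotaL_apply {R : Type*} [CommRing R] {n : ℕ} (x : Fin n → R) :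
    iotaL R n x = Sum.elim (fun _ => (0 : R)) x := rfl

private lemma iotaL_inj {R : Type*} [CommRing R] {n : ℕ} (x : Fin n → R)
    (h : iotaL R n x = 0) : x = 0 := by
  funext j; exact congrFun h (Sum.inr j)

private lemma decompV {R : Type*} [CommRing R] {n : ℕ} (v : (Fin 1 ⊕ Fin n) → R) :
    v = v (Sum.inl 0) • e0V R n + iotaL R n (fun i => v (Sum.inr i)) := by
  funext i
  cases i with
  | inl j =>
      have : j = 0 := Subsingleton.elim j 0
      subst this
      simp [e0V, iotaL_apply]
  | inr j => simp [e0V, iotaL_apply]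

private lemma e0V_inl {R : Type*} [CommRing R] {n : ℕ} (j : Fin 1) :
    e0V R n (Sum.inl j) = 1 := rfl

private lemma e0V_inr {R : Type*} [CommRing R] {n : ℕ} (j : Fin n) :
    e0V R n (Sum.inr j) = 0 := rfl

private lemma iotaL_inl {R : Type*} [CommRing R] {n : ℕ} (x : Fin n → R) (j : Fin 1) :
    iotaL R n x (Sum.inl j) = 0 := rfl

private lemma iotaL_inr {R : Type*} [CommRing R] {n : ℕ} (x : Fin n → R) (j : Fin n) :
    iotaL R n x (Sum.inr j) = x j := rfl

private lemma vecMul_apply' {R : Type*} [CommRing R] {ι κ : Type*} [Fintype ι]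
    (v : ι → R) (M : Matrix ι κ R) (j : κ) :
    (v ᵥ* M) j = ∑ i, v i * M i j := by
  simp [Matrix.vecMul, dotProduct]

private lemma single_vecMul' {R : Type*} [CommRing R] {ι κ : Type*} [Fintype ι]
    [DecidableEq ι] (i : ι) (M : Matrix ι κ R) :
    (Pi.single i 1 : ι → R) ᵥ* M = M i := by
  funext j
  rw [vecMul_apply']
  simp [Pi.single_apply]

private lemma single_dot {R : Type*} [CommRing R] {n : ℕ} (i : Fin n) (v : Fin n → R) :
    (Pi.single i 1 : Fin n → R) ⬝ᵥ v = v i := by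
  simp [dotProduct, Pi.single_apply]

private lemma vecMul_matrix_sum {R : Type*} [CommRing R] {κ₁ κ₂ : Type*} [Fintype κ₁]
    {ι : Type*} (s : Finset ι) (v : κ₁ → R) (M : ι → Matrix κ₁ κ₂ R) :
    v ᵥ* (∑ i ∈ s, M i) = ∑ i ∈ s, v ᵥ* M i := by
  funext j
  rw [vecMul_apply']
  simp only [Finset.sum_apply, Matrix.sum_apply, Finset.mul_sum, vecMul_apply']
  exact Finset.sum_comm

private lemma vecMul_matrix_smul {R : Type*} [CommRing R] {κ₁ κ₂ : Type*} [Fintype κ₁]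
    (t : R) (v : κ₁ → R) (M : Matrix κ₁ κ₂ R) :
    v ᵥ* (t • M) = t • (v ᵥ* M) := by
  funext j
  simp only [vecMul_apply', Matrix.smul_apply, Pi.smul_apply, smul_eq_mul,
    Finset.mul_sum]
  apply Finset.sum_congr rfl
  intro i _
  ring

private lemma smul_vecMul' {R : Type*} [CommRing R] {κ₁ κ₂ : Type*} [Fintype κ₁]
    (t : R) (v : κ₁ → R) (M : Matrix κ₁ κ₂ R) :
    (t • v) ᵥ* M = t • (v ᵥ* M) := by
  funext j
  simp only [vecMul_apply', Pi.smul_apply, smul_eq_mul, Finset.mul_sum]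
  exact Finset.sum_congr rfl fun i _ => by ring

private lemma wedge_formula {R : Type*} [CommRing R] {n : ℕ} (s t : R)
    (x y : Fin n → R) :
    wedge (s • e0V R n + iotaL R n x) (t • e0V R n + iotaL R n y) =
      Sum.elim (fun j => s * y j - t * x j)
        (fun q : {q : Fin n × Fin n // q.1 < q.2} =>
          x q.1.1 * y q.1.2 - x q.1.2 * y q.1.1) := by
  funext i
  cases i with
  | inl j =>
      simp only [wedge, Sum.elim_inl, Pi.add_apply, Pi.smul_apply, smul_eq_mul,
        e0V_inl, e0V_inr, iotaL_inl, iotaL_inr]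
      ring
  | inr q =>
      simp only [wedge, Sum.elim_inr, Pi.add_apply, Pi.smul_apply, smul_eq_mul,
        e0V_inl, e0V_inr, iotaL_inl, iotaL_inr]
      ring

private lemma exists_ortho {R : Type*} [Field R] {n : ℕ} (hn : 2 ≤ n)
    (m' : Fin n → R) : ∃ x : Fin n → R, x ≠ 0 ∧ ∑ i, x i * m' i = 0 := by
  classical
  obtain ⟨i0, i1, hne⟩ : ∃ i0 i1 : Fin n, i1 ≠ i0 :=
    ⟨⟨0, by omega⟩, ⟨1, by omega⟩, by
      intro h
      exact absurd (congrArg Fin.val h) (by norm_num)⟩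
  have hsum : ∀ (k : Fin n) (t : R), ∑ i, (Pi.single k t : Fin n → R) i * m' i = t * m' k := by
    intro k t
    rw [Finset.sum_eq_single k]
    · rw [Pi.single_eq_same]
    · intro j _ hj
      rw [Pi.single_eq_of_ne hj, zero_mul]
    · intro hk
      exact absurd (Finset.mem_univ k) hk
  by_cases h : m' i0 = 0
  · refine ⟨Pi.single i0 1, ?_, ?_⟩
    · intro hz
      have h1 := congrFun hz i0
      rw [Pi.single_eq_same, Pi.zero_apply] at h1
      exact one_ne_zero h1
    · rw [hsum, h, mul_zero]
  · refine ⟨(Pi.single i0 (m' i1) - Pi.single i1 (m' i0) : Fin n → R), ?_, ?_⟩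
    · intro hz
      have h1 := congrFun hz i1
      rw [Pi.sub_apply, Pi.single_eq_same, Pi.single_eq_of_ne hne, Pi.zero_apply,
        zero_sub, neg_eq_zero] at h1
      exact h h1
    · have expand : ∀ i, ((Pi.single i0 (m' i1) - Pi.single i1 (m' i0) : Fin n → R)) i * m' i
          = (Pi.single i0 (m' i1) : Fin n → R) i * m' i
            - (Pi.single i1 (m' i0) : Fin n → R) i * m' i := by
        intro i
        rw [Pi.sub_apply, sub_mul]
      rw [Finset.sum_congr rfl (fun i _ => expand i), Finset.sum_sub_distrib, hsum, hsum]
      ring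

/-- Arithmetic lemma: if `p ≥ 2`, `k < n` and `(p^n - 1) ∣ (p^k - 1)(p - 1)` then `k = 0`. -/
private lemma aux_nat (p n k : ℕ) (hp : 2 ≤ p) (hk : k < n)
    (hdvd : (p ^ n - 1) ∣ (p ^ k - 1) * (p - 1)) : k = 0 := by
  by_contra hk0
  have hk1 : 1 ≤ k := Nat.one_le_iff_ne_zero.mpr hk0
  have hkn : k ≤ n - 1 := by omega
  have h2a : 2 ≤ p ^ k := le_trans hp (Nat.le_self_pow (by omega) p)
  have hP : p ^ k ≤ p ^ (n - 1) := Nat.pow_le_pow_right (by omega) hkn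
  have h2P : 2 ≤ p ^ (n - 1) := le_trans hp (Nat.le_self_pow (by omega) p)
  have hPn : p ^ (n - 1) * p = p ^ n := by
    rw [← pow_succ]
    congr 1
    omega
  have hpos : 0 < (p ^ k - 1) * (p - 1) := by
    apply Nat.mul_pos <;> omega
  have hle : p ^ n - 1 ≤ (p ^ k - 1) * (p - 1) := Nat.le_of_dvd hpos hdvd
  have key : ∀ P q N : ℕ, 2 ≤ P → 2 ≤ q → P * q = N → (P - 1) * (q - 1) < N - 1 := by
    intro P q N hP2 hq2 hN
    subst hN
    obtain ⟨P', rfl⟩ := Nat.exists_eq_add_of_le hP2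
    obtain ⟨q', rfl⟩ := Nat.exists_eq_add_of_le hq2
    have e1 : (2 + P' - 1) * (2 + q' - 1) = P' * q' + P' + q' + 1 := by
      have : 2 + P' - 1 = P' + 1 := by omega
      have h2 : 2 + q' - 1 = q' + 1 := by omega
      rw [this, h2]; ring
    have e2 : (2 + P') * (2 + q') = P' * q' + 2 * P' + 2 * q' + 4 := by ring
    omega
  have hlt : (p ^ k - 1) * (p - 1) < p ^ n - 1 := by
    have h1 : (p ^ k - 1) * (p - 1) ≤ (p ^ (n - 1) - 1) * (p - 1) :=
      Nat.mul_le_mul_right _ (by omega)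
    have h2 : (p ^ (n - 1) - 1) * (p - 1) < p ^ n - 1 := key _ _ _ h2P hp hPn
    omega
  omega

/-- `1 ≤ p^k`. -/
private lemma one_le_pow' (p k : ℕ) (hp : 2 ≤ p) : 1 ≤ p ^ k :=
  Nat.one_le_pow _ _ (by omega)

end Aux

section Field

variable (p n : ℕ) [Fact p.Prime]

/-- Frobenius compatibility of `aeval` over `ZMod p`. -/
private lemma frob_aeval (q : Polynomial (ZMod p)) (x : GaloisField p n) :
    (Polynomial.aeval (x ^ p)) q = ((Polynomial.aeval x) q) ^ p := by
  have hfr : ∀ y : GaloisField p n, frobenius (GaloisField p n) p y = y ^ p :=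
    fun y => rfl
  rw [aeval_def, aeval_def]
  have hcomp : (frobenius (GaloisField p n) p).comp
      (algebraMap (ZMod p) (GaloisField p n)) = algebraMap (ZMod p) (GaloisField p n) := by
    ext c
    simp only [RingHom.comp_apply]
    rw [hfr, ← map_pow, ZMod.pow_card]
  have h := Polynomial.hom_eval₂ q (algebraMap (ZMod p) (GaloisField p n))
    (frobenius (GaloisField p n) p) x
  simp only [hfr, hcomp] at h
  exact h.symm

/-- The roots of the minimal polynomial of a primitive element `α` of `GF(p^n)`
are exactly the `α^(p^k)`, `k < n`; and the minimal polynomial has degree `n`. -/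
private lemma galois_roots (hn : n ≠ 0) (α : GaloisField p n)
    (hα : orderOf α = p ^ n - 1) :
    (minpoly (ZMod p) α).natDegree = n ∧
      ∀ β : GaloisField p n, (Polynomial.aeval β) (minpoly (ZMod p) α) = 0 →
        ∃ k < n, β = α ^ p ^ k := by
  classical
  have hp2 : 2 ≤ p := (Fact.out : p.Prime).two_le
  set m := minpoly (ZMod p) α with hm
  have hαint : IsIntegral (ZMod p) α := Algebra.IsIntegral.isIntegral α
  have hm0 : m ≠ 0 := minpoly.ne_zero hαint
  have hpn1 : 1 ≤ p ^ n - 1 := by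
    have h2 : 2 ≤ p ^ n := le_trans hp2 (Nat.le_self_pow hn p)
    omega
  have hα0 : α ≠ 0 := by
    intro h
    have h1 : α ^ (p ^ n - 1) = 1 := by rw [← hα]; exact pow_orderOf_eq_one α
    rw [h, zero_pow (by omega)] at h1
    exact zero_ne_one h1
  have hroot : ∀ k : ℕ, (Polynomial.aeval (α ^ p ^ k)) m = 0 := by
    intro k
    induction k with
    | zero => rw [pow_zero, pow_one]; exact minpoly.aeval (ZMod p) α
    | succ k ih =>
        have h1 : α ^ p ^ (k + 1) = (α ^ p ^ k) ^ p := by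
          rw [← pow_mul, pow_succ]
        rw [h1, frob_aeval p n, ih, zero_pow (by omega : p ≠ 0)]
  have hdist : ∀ j k : ℕ, j < n → k < n → α ^ p ^ j = α ^ p ^ k → j = k := by
    have key : ∀ j k, j < k → k < n → α ^ p ^ j ≠ α ^ p ^ k := by
      intro j k hjk hkn heq
      have hlt : p ^ j < p ^ k := Nat.pow_lt_pow_right (by omega) hjk
      have h1 : α ^ p ^ j * α ^ (p ^ k - p ^ j) = α ^ p ^ j := by
        rw [← pow_add]
        rw [show p ^ j + (p ^ k - p ^ j) = p ^ k by omega]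
        exact heq.symm
    
      have hαpow : α ^ p ^ j ≠ 0 := pow_ne_zero _ hα0
      have h2 : α ^ (p ^ k - p ^ j) = 1 :=
        mul_left_cancel₀ hαpow (h1.trans (mul_one _).symm)
      have h3 := orderOf_dvd_of_pow_eq_one h2
      rw [hα] at h3
      have h4 : 0 < p ^ k - p ^ j := by omega
      have h5 := Nat.le_of_dvd h4 h3
      have h6 : p ^ k ≤ p ^ (n - 1) := Nat.pow_le_pow_right (by omega) (by omega)
      have h7 : p ^ (n - 1) < p ^ n := Nat.pow_lt_pow_right (by omega) (by omega)
      have h8 : 1 ≤ p ^ j := Nat.one_le_pow _ _ (by omega)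
      omega
    intro j k hj hk heq
    rcases lt_trichotomy j k with h | h | h
    · exact absurd heq (key _ _ h hk)
    · exact h
    · exact absurd heq.symm (key _ _ h hj)
  have hdegle : m.natDegree ≤ n := by
    have h := minpoly.natDegree_le (A := ZMod p) α
    rwa [GaloisField.finrank p hn] at h
  set mm := m.map (algebraMap (ZMod p) (GaloisField p n)) with hmm
  have hmm0 : mm ≠ 0 :=
    (Polynomial.map_ne_zero_iff (algebraMap (ZMod p) (GaloisField p n)).injective).mpr hm0
  have hmemroot : ∀ k : ℕ, α ^ p ^ k ∈ mm.roots := by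
    intro k
    rw [Polynomial.mem_roots hmm0]
    show mm.eval (α ^ p ^ k) = 0
    rw [hmm, Polynomial.eval_map, ← Polynomial.aeval_def]
    exact hroot k
  set s : Finset (GaloisField p n) := (Finset.range n).image (fun k => α ^ p ^ k) with hs
  have hscard : s.card = n := by
    rw [hs, Finset.card_image_of_injOn, Finset.card_range]
    intro j hj k hk heq
    exact hdist j k (Finset.mem_range.mp hj) (Finset.mem_range.mp hk) heq
  have hsub : s ⊆ mm.roots.toFinset := by
    intro x hx
    rw [hs, Finset.mem_image] at hx
    obtain ⟨k, _, rfl⟩ := hx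
    rw [Multiset.mem_toFinset]
    exact hmemroot k
  have hcard2 : mm.roots.toFinset.card ≤ m.natDegree := by
    refine le_trans (Multiset.toFinset_card_le _)
      (le_trans (Polynomial.card_roots' mm) ?_)
    rw [hmm]
    exact Polynomial.natDegree_map_le
  have hdegn : m.natDegree = n := by
    refine le_antisymm hdegle ?_
    calc n = s.card := hscard.symm
    _ ≤ mm.roots.toFinset.card := Finset.card_le_card hsub
    _ ≤ m.natDegree := hcard2
  refine ⟨hdegn, ?_⟩
  intro β hβ
  have hβroot : β ∈ mm.roots.toFinset := by
    rw [Multiset.mem_toFinset, Polynomial.mem_roots hmm0]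
    show mm.eval β = 0
    rw [hmm, Polynomial.eval_map, ← Polynomial.aeval_def]
    exact hβ
  have hseq : s = mm.roots.toFinset := by
    refine Finset.eq_of_subset_of_card_le hsub ?_
    rw [hscard]
    exact hcard2.trans (le_of_eq hdegn)
  have hβ2 : β ∈ (Finset.range n).image (fun k => α ^ p ^ k) := by
    show β ∈ s
    rw [hseq]
    exact hβroot
  rw [Finset.mem_image] at hβ2
  obtain ⟨k, hk, hkeq⟩ := hβ2
  exact ⟨k, Finset.mem_range.mp hk, hkeq.symm⟩

end Field

section Cyclic

variable {p : ℕ} [Fact p.Prime] {n : ℕ}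

/-- Any nonzero vector is cyclic for a matrix with irreducible minimal polynomial of
full degree. -/
private lemma cyclic_span (A : Matrix (Fin n) (Fin n) (ZMod p))
    (hirr : Irreducible (minpoly (ZMod p) A))
    (hdeg : (minpoly (ZMod p) A).natDegree = n)
    (v : Fin n → ZMod p) (hv : v ≠ 0) (hn : n ≠ 0) :
    Submodule.span (ZMod p) (Set.range fun k : Fin n => v ᵥ* (A ^ (k : ℕ))) = ⊤ := by
  have : Nonempty (Fin n) := ⟨⟨0, Nat.pos_of_ne_zero hn⟩⟩
  have hindep : LinearIndependent (ZMod p) (fun k : Fin n => v ᵥ* (A ^ (k : ℕ))) := by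
    rw [Fintype.linearIndependent_iff]
    intro t ht
    by_contra hne
    push_neg at hne
    obtain ⟨i0, hi0⟩ := hne
    set q : Polynomial (ZMod p) := ∑ k : Fin n, Polynomial.monomial (k : ℕ) (t k)
      with hq
    have hqcoeff : ∀ k : Fin n, q.coeff (k : ℕ) = t k := by
      intro k
      rw [hq, Polynomial.finset_sum_coeff]
      rw [Finset.sum_eq_single k]
      · simp [Polynomial.coeff_monomial]
      · intro j _ hj
        rw [Polynomial.coeff_monomial, if_neg]
        intro h
        exact hj (Fin.ext h)
      · intro h
        exact absurd (Finset.mem_univ k) h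
    have hq0 : q ≠ 0 := by
      intro h
      apply hi0
      rw [← hqcoeff i0, h, Polynomial.coeff_zero]
    have hqdeg : q.natDegree < n := by
      have h1 : q.natDegree ≤ n - 1 := by
        rw [hq]
        apply Polynomial.natDegree_sum_le_of_forall_le
        intro k _
        exact le_trans (Polynomial.natDegree_monomial_le _) (by omega)
      omega
    have hvq : v ᵥ* (Polynomial.aeval A q) = 0 := by
      rw [hq, map_sum, vecMul_matrix_sum]
      refine Eq.trans (Finset.sum_congr rfl ?_) ht
      intro k _
      rw [Polynomial.aeval_monomial, ← Algebra.smul_def, vecMul_matrix_smul]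
    have hndvd : ¬ minpoly (ZMod p) A ∣ q := by
      intro hdvd
      have := Polynomial.natDegree_le_of_dvd hdvd hq0
      omega
    have hcop : IsCoprime (minpoly (ZMod p) A) q :=
      (hirr.coprime_iff_not_dvd).mpr hndvd
    obtain ⟨r, s, hrs⟩ := hcop
    have h1 : Polynomial.aeval A (r * minpoly (ZMod p) A + s * q) = 1 := by
      rw [hrs]
      simp
    simp only [_root_.map_add, _root_.map_mul, minpoly.aeval, mul_zero, zero_add] at h1
    have h2 : (Polynomial.aeval A q) * (Polynomial.aeval A s) = 1 := by
      calc Polynomial.aeval A q * Polynomial.aeval A s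
          = Polynomial.aeval A (q * s) := (_root_.map_mul _ _ _).symm
      _ = Polynomial.aeval A (s * q) := by rw [mul_comm]
      _ = Polynomial.aeval A s * Polynomial.aeval A q := _root_.map_mul _ _ _
      _ = 1 := h1
    have hv0 : v = 0 := by
      have h3 : v ᵥ* ((Polynomial.aeval A q) * (Polynomial.aeval A s)) = v := by
        rw [h2, Matrix.vecMul_one]
      rw [← Matrix.vecMul_vecMul, hvq, Matrix.zero_vecMul] at h3
      exact h3.symm
    exact hv hv0
  apply hindep.span_eq_top_of_card_eq_finrank
  rw [Fintype.card_fin, Module.finrank_pi, Fintype.card_fin]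

end Cyclic

set_option maxHeartbeats 2000000 in
/-- Let `p` be a prime, `n ≥ 3`, `F = GF(p)`, `V = F^(n+1)` with basis
`v₀, …, v_n` and `W = Λ²V`. Let `α` be a primitive element of `GF(pⁿ)`, `m` its minimal
polynomial over `F`, and `A` the `n × n` companion matrix of `m` (the matrix whose
characteristic and minimal polynomials equal `m`). Let `f : V → W` be the linear map whose
matrix with respect to these bases is the block matrix `[[b, c], [A, 0]]` with `b` a
nonzero `1 × n` row vector and `c` a nonzero `1 × C(n,2)` row vector. Then the group
`G = {g ∈ GL(V) : f(g(v)) = (Λ²g)(f(v)) for all v ∈ V}` is trivial: every such `g` is the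
identity. Here `Λ²g` is the (unique) linear map on `W` with `(Λ²g)(x ∧ y) = g(x) ∧ g(y)`. -/
theorem stmt12 (p n : ℕ) [Fact p.Prime] (hn : 3 ≤ n)
    (α : GaloisField p n) (hα : orderOf α = p ^ n - 1)
    (m : Polynomial (ZMod p)) (hm : m = minpoly (ZMod p) α)
    (A : Matrix (Fin n) (Fin n) (ZMod p))
    (hchar : A.charpoly = m) (hminA : minpoly (ZMod p) A = m)
    (b : Matrix (Fin 1) (Fin n) (ZMod p)) (hb : b ≠ 0)
    (c : Matrix (Fin 1) {q : Fin n × Fin n // q.1 < q.2} (ZMod p)) (hc : c ≠ 0)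
    (f : ((Fin 1 ⊕ Fin n) → ZMod p) →ₗ[ZMod p] (WIdx n → ZMod p))
    (hf : f = (Matrix.fromBlocks b c A 0).vecMulLinear)
    (g : ((Fin 1 ⊕ Fin n) → ZMod p) ≃ₗ[ZMod p] ((Fin 1 ⊕ Fin n) → ZMod p))
    (g2 : (WIdx n → ZMod p) →ₗ[ZMod p] (WIdx n → ZMod p))
    (hg2 : ∀ x y : (Fin 1 ⊕ Fin n) → ZMod p, g2 (wedge x y) = wedge (g x) (g y))
    (hcomm : ∀ v : (Fin 1 ⊕ Fin n) → ZMod p, f (g v) = g2 (f v)) :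
    g = LinearEquiv.refl (ZMod p) ((Fin 1 ⊕ Fin n) → ZMod p) := by
  classical
  have hp2 : 2 ≤ p := (Fact.out : p.Prime).two_le
  have hn0 : n ≠ 0 := by omega
  obtain ⟨hdegm', hroots⟩ := galois_roots p n hn0 α hα
  have hdegm : m.natDegree = n := by rw [hm]; exact hdegm'
  have hαint : IsIntegral (ZMod p) α := Algebra.IsIntegral.isIntegral α
  have hmirr : Irreducible m := by rw [hm]; exact minpoly.irreducible hαint
  have hmα : Polynomial.aeval α m = 0 := by rw [hm]; exact minpoly.aeval _ _
  have hpn2 : 2 ≤ p ^ n := le_trans hp2 (Nat.le_self_pow hn0 p)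
  have hα0 : α ≠ 0 := by
    intro h
    have h1 : α ^ (p ^ n - 1) = 1 := by rw [← hα]; exact pow_orderOf_eq_one α
    rw [h, zero_pow (by omega)] at h1
    exact zero_ne_one h1
  -- `A` is invertible
  have hXndvd : ¬(X : Polynomial (ZMod p)) ∣ m := by
    rintro ⟨m', hmeq⟩
    rcases hmirr.isUnit_or_isUnit hmeq with h | h
    · exact Polynomial.not_isUnit_X h
    · obtain ⟨r0, hr0, hCr0⟩ := Polynomial.isUnit_iff.mp h
      have hdeg1 : m.natDegree = 1 := by
        rw [hmeq, ← hCr0, Polynomial.natDegree_mul Polynomial.X_ne_zero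
          (Polynomial.C_ne_zero.mpr hr0.ne_zero)]
        simp
      omega
  obtain ⟨r, s, hrs⟩ : IsCoprime (X : Polynomial (ZMod p)) m :=
    Polynomial.irreducible_X.coprime_iff_not_dvd.mpr hXndvd
  have hmA : Polynomial.aeval A m = 0 := by rw [← hminA]; exact minpoly.aeval _ _
  have hA'A : Polynomial.aeval A r * A = 1 := by
    have h1 := congrArg (Polynomial.aeval A) hrs
    simp only [_root_.map_add, _root_.map_mul, _root_.map_one, Polynomial.aeval_X, hmA,
      mul_zero, add_zero] at h1
    calc Polynomial.aeval A r * A = Polynomial.aeval A (r * X) := by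
          rw [_root_.map_mul, Polynomial.aeval_X]
    _ = 1 := by rw [← h1, _root_.map_mul, Polynomial.aeval_X]
  have hAA' : A * Polynomial.aeval A r = 1 := by
    calc A * Polynomial.aeval A r = Polynomial.aeval A (X * r) := by
          rw [_root_.map_mul, Polynomial.aeval_X]
    _ = Polynomial.aeval A (r * X) := by rw [mul_comm]
    _ = Polynomial.aeval A r * A := by rw [_root_.map_mul, Polynomial.aeval_X]
    _ = 1 := hA'A
  have hAinj : ∀ x : Fin n → ZMod p, x ᵥ* A = 0 → x = 0 := by
    intro x hx
    have h1 : (x ᵥ* A) ᵥ* Polynomial.aeval A r = x := by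
      rw [Matrix.vecMul_vecMul, hAA', Matrix.vecMul_one]
    rw [hx, Matrix.zero_vecMul] at h1
    exact h1.symm
  have hAsurj : ∀ y : Fin n → ZMod p, (y ᵥ* Polynomial.aeval A r) ᵥ* A = y := by
    intro y
    rw [Matrix.vecMul_vecMul, hA'A, Matrix.vecMul_one]
  -- nonzero rows of b and c
  have hbne : b 0 ≠ 0 := by
    intro h0
    apply hb
    ext i j
    have hi : i = 0 := Subsingleton.elim i 0
    subst hi
    simpa using congrFun h0 j
  obtain ⟨q0, hq0⟩ : ∃ q0, c 0 q0 ≠ 0 := by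
    by_contra hq
    push_neg at hq
    apply hc
    ext i q
    have hi : i = 0 := Subsingleton.elim i 0
    subst hi
    simpa using hq q
  -- block decomposition of g
  set a : ZMod p := g (e0V (ZMod p) n) (Sum.inl 0) with hadef
  set u : Fin n → ZMod p := fun j => g (e0V (ZMod p) n) (Sum.inr j) with hudef
  set w : Fin n → ZMod p := fun i => g (iotaL (ZMod p) n (Pi.single i 1)) (Sum.inl 0)
    with hwdef
  set B : Matrix (Fin n) (Fin n) (ZMod p) :=
    Matrix.of (fun i j => g (iotaL (ZMod p) n (Pi.single i 1)) (Sum.inr j)) with hBdef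
  have ge0 : g (e0V (ZMod p) n) = a • e0V (ZMod p) n + iotaL (ZMod p) n u :=
    decompV _
  have hrow : ∀ i : Fin n, g (iotaL (ZMod p) n (Pi.single i 1))
      = w i • e0V (ZMod p) n + iotaL (ZMod p) n (B i) := fun i => decompV _
  have giota : ∀ y : Fin n → ZMod p,
      g (iotaL (ZMod p) n y) = (y ⬝ᵥ w) • e0V (ZMod p) n + iotaL (ZMod p) n (y ᵥ* B) := by
    intro y
    have hyrep : iotaL (ZMod p) n y = ∑ i, y i • iotaL (ZMod p) n (Pi.single i 1) := by
      calc iotaL (ZMod p) n y = iotaL (ZMod p) n (∑ i, Pi.single i (y i)) := by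
            rw [Finset.univ_sum_single]
      _ = ∑ i, iotaL (ZMod p) n (Pi.single i (y i)) := map_sum _ _ _
      _ = ∑ i, y i • iotaL (ZMod p) n (Pi.single i 1) := by
          refine Finset.sum_congr rfl fun i _ => ?_
          rw [← _root_.map_smul]
          congr 1
          funext j
          rcases eq_or_ne j i with rfl | hji
          · simp
          · simp [Pi.single_eq_of_ne hji]
    rw [hyrep, map_sum]
    simp only [_root_.map_smul, hrow]
    have hsplit : ∀ i : Fin n, y i • (w i • e0V (ZMod p) n + iotaL (ZMod p) n (B i))
        = (y i * w i) • e0V (ZMod p) n + y i • iotaL (ZMod p) n (B i) := by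
      intro i
      rw [smul_add, smul_smul]
    rw [Finset.sum_congr rfl fun i _ => hsplit i, Finset.sum_add_distrib]
    congr 1
    · rw [← Finset.sum_smul]
      rfl
    · have h1 : y ᵥ* B = ∑ i, y i • B i := by
        funext j
        rw [vecMul_apply']
        simp [Finset.sum_apply]
      rw [h1, map_sum]
      refine (Finset.sum_congr rfl fun i _ => ?_).symm
      rw [_root_.map_smul]
  -- values of f
  have fval1 : ∀ (v : (Fin 1 ⊕ Fin n) → ZMod p) (j : Fin n),
      f v (Sum.inl j) = v (Sum.inl 0) * b 0 j + ∑ i, v (Sum.inr i) * A i j := by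
    intro v j
    rw [hf, Matrix.vecMulLinear_apply, vecMul_apply', Fintype.sum_sum_type]
    simp [Matrix.fromBlocks]
  have fval2 : ∀ (v : (Fin 1 ⊕ Fin n) → ZMod p) (q : {q : Fin n × Fin n // q.1 < q.2}),
      f v (Sum.inr q) = v (Sum.inl 0) * c 0 q := by
    intro v q
    rw [hf, Matrix.vecMulLinear_apply, vecMul_apply', Fintype.sum_sum_type]
    simp [Matrix.fromBlocks]
  have fcomp : ∀ (t : ZMod p) (y : Fin n → ZMod p),
      f (t • e0V (ZMod p) n + iotaL (ZMod p) n y)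
        = Sum.elim (fun j => t * b 0 j + (y ᵥ* A) j) (fun q => t * c 0 q) := by
    intro t y
    funext i
    cases i with
    | inl j =>
        rw [fval1]
        simp [e0V_inl, e0V_inr, iotaL_inl, iotaL_inr, vecMul_apply']
    | inr q =>
        rw [fval2]
        simp [e0V_inl, iotaL_inl]
  have hfι : ∀ x : Fin n → ZMod p,
      f (iotaL (ZMod p) n x) = wedge (e0V (ZMod p) n) (iotaL (ZMod p) n (x ᵥ* A)) := by
    intro x
    have h1 : f (iotaL (ZMod p) n x)
        = f ((0 : ZMod p) • e0V (ZMod p) n + iotaL (ZMod p) n x) := by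
      rw [zero_smul, zero_add]
    rw [h1, fcomp]
    funext i
    cases i with
    | inl j => simp [wedge, e0V_inl, e0V_inr, iotaL_inl, iotaL_inr]
    | inr q => simp [wedge, e0V_inr, iotaL_inl, iotaL_inr]
  -- the two master identities
  have keyx : ∀ x : Fin n → ZMod p,
      Sum.elim (fun j => (x ⬝ᵥ w) * b 0 j + ((x ᵥ* B) ᵥ* A) j) (fun q => (x ⬝ᵥ w) * c 0 q)
        = Sum.elim (fun j => a * ((x ᵥ* A) ᵥ* B) j - ((x ᵥ* A) ⬝ᵥ w) * u j)
          (fun q : {q : Fin n × Fin n // q.1 < q.2} =>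
            u q.1.1 * ((x ᵥ* A) ᵥ* B) q.1.2 - u q.1.2 * ((x ᵥ* A) ᵥ* B) q.1.1) := by
    intro x
    have h := hcomm (iotaL (ZMod p) n x)
    rw [hfι, hg2, ge0, giota, giota, fcomp, wedge_formula] at h
    exact h
  have E1 : ∀ (x : Fin n → ZMod p) (j : Fin n),
      (x ⬝ᵥ w) * b 0 j + ((x ᵥ* B) ᵥ* A) j
        = a * ((x ᵥ* A) ᵥ* B) j - ((x ᵥ* A) ⬝ᵥ w) * u j := by
    intro x j
    simpa using congrFun (keyx x) (Sum.inl j)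
  have E2 : ∀ (x : Fin n → ZMod p) (q : {q : Fin n × Fin n // q.1 < q.2}),
      (x ⬝ᵥ w) * c 0 q
        = u q.1.1 * ((x ᵥ* A) ᵥ* B) q.1.2 - u q.1.2 * ((x ᵥ* A) ᵥ* B) q.1.1 := by
    intro x q
    simpa using congrFun (keyx x) (Sum.inr q)
  -- identity from v₀
  have hfe0 : f (e0V (ZMod p) n)
      = wedge (e0V (ZMod p) n) (iotaL (ZMod p) n (b 0))
        + ∑ q : {q : Fin n × Fin n // q.1 < q.2}, c 0 q •
            wedge (iotaL (ZMod p) n (Pi.single q.1.1 1 : Fin n → ZMod p))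
              (iotaL (ZMod p) n (Pi.single q.1.2 1 : Fin n → ZMod p)) := by
    funext i
    cases i with
    | inl j =>
        rw [fval1]
        simp [wedge, e0V_inl, e0V_inr, iotaL_inl, iotaL_inr]
    | inr q' =>
        rw [fval2]
        simp only [Pi.add_apply, Finset.sum_apply, Pi.smul_apply, smul_eq_mul, wedge,
          Sum.elim_inr, e0V_inl, e0V_inr, iotaL_inl, iotaL_inr]
        rw [Finset.sum_eq_single q']
        · have hne1 : q'.1.2 ≠ q'.1.1 := ne_of_gt q'.2
          rw [Pi.single_eq_same, Pi.single_eq_same, Pi.single_eq_of_ne hne1,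
            Pi.single_eq_of_ne hne1.symm]
          ring
        · intro q _ hqne
          have h1 : (Pi.single q.1.1 (1 : ZMod p) : Fin n → ZMod p) q'.1.1 * (Pi.single q.1.2 (1 : ZMod p) : Fin n → ZMod p) q'.1.2 = 0 := by
            rcases eq_or_ne q'.1.1 q.1.1 with h | h
            · rcases eq_or_ne q'.1.2 q.1.2 with h2 | h2
              · exact absurd (Subtype.ext (Prod.ext h.symm h2.symm)) hqne
              · rw [Pi.single_eq_of_ne h2, mul_zero]
            · rw [Pi.single_eq_of_ne h, zero_mul]
          have h2 : (Pi.single q.1.1 (1 : ZMod p) : Fin n → ZMod p) q'.1.2 * (Pi.single q.1.2 (1 : ZMod p) : Fin n → ZMod p) q'.1.1 = 0 := by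
            rcases eq_or_ne q'.1.2 q.1.1 with h | h
            · rcases eq_or_ne q'.1.1 q.1.2 with h2 | h2
              · exfalso
                have hlt1 : q.1.1 < q.1.2 := q.2
                have hlt2 : q'.1.1 < q'.1.2 := q'.2
                rw [h2, h] at hlt2
                exact absurd (hlt1.trans hlt2) (lt_irrefl _)
              · rw [Pi.single_eq_of_ne h2, mul_zero]
            · rw [Pi.single_eq_of_ne h, zero_mul]
          rw [h1, h2]
          ring
        · intro hq'
          exact absurd (Finset.mem_univ q') hq'
  have hge0' : g2 (f (e0V (ZMod p) n)) =
      wedge (a • e0V (ZMod p) n + iotaL (ZMod p) n u)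
        (((b 0) ⬝ᵥ w) • e0V (ZMod p) n + iotaL (ZMod p) n ((b 0) ᵥ* B))
      + ∑ q : {q : Fin n × Fin n // q.1 < q.2}, c 0 q •
          wedge (w q.1.1 • e0V (ZMod p) n + iotaL (ZMod p) n (B q.1.1))
                (w q.1.2 • e0V (ZMod p) n + iotaL (ZMod p) n (B q.1.2)) := by
    rw [hfe0, _root_.map_add, map_sum]
    congr 1
    · rw [hg2, ge0, giota]
    · refine Finset.sum_congr rfl fun q _ => ?_
      rw [_root_.map_smul, hg2, hrow, hrow]
  have hfge0 : f (g (e0V (ZMod p) n)) =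
      Sum.elim (fun j => a * b 0 j + (u ᵥ* A) j) (fun q => a * c 0 q) := by
    rw [ge0, fcomp]
  have E3a : ∀ j : Fin n, a * b 0 j + (u ᵥ* A) j
      = (a * ((b 0) ᵥ* B) j - ((b 0) ⬝ᵥ w) * u j)
        + ∑ q : {q : Fin n × Fin n // q.1 < q.2},
            c 0 q * (w q.1.1 * B q.1.2 j - w q.1.2 * B q.1.1 j) := by
    intro j
    have h := congrFun ((hfge0.symm.trans (hcomm _)).trans hge0') (Sum.inl j)
    simp only [wedge_formula, Sum.elim_inl, Pi.add_apply, Finset.sum_apply,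
      Pi.smul_apply, smul_eq_mul] at h
    exact h
  -- Step 1 : u = 0
  have hu0 : u = 0 := by
    by_contra hune
    obtain ⟨j0, hj0⟩ : ∃ j0, u j0 ≠ 0 := by
      by_contra hja
      push_neg at hja
      exact hune (funext hja)
    by_cases hw0 : w = 0
    · -- subcase w = 0 : B has rank ≤ 1, contradiction with invertibility of g
      obtain ⟨x, hx0, hxm⟩ := exists_ortho (R := ZMod p) (by omega)
        (fun i => (A * B) i j0)
      have hzj0 : ((x ᵥ* A) ᵥ* B) j0 = 0 := by
        rw [Matrix.vecMul_vecMul, vecMul_apply']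
        exact hxm
      have hz : (x ᵥ* A) ᵥ* B = 0 := by
        funext k
        simp only [Pi.zero_apply]
        rcases lt_trichotomy k j0 with hlt | heq | hgt
        · have h := E2 x ⟨(k, j0), hlt⟩
          rw [hw0] at h
          simp only [dotProduct_zero, zero_mul] at h
          rw [hzj0, mul_zero] at h
          have h2 : u j0 * ((x ᵥ* A) ᵥ* B) k = 0 := by linear_combination h
          exact (mul_eq_zero.mp h2).resolve_left hj0
        · rw [heq]; exact hzj0
        · have h := E2 x ⟨(j0, k), hgt⟩
          rw [hw0] at h
          simp only [dotProduct_zero, zero_mul] at h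
          rw [hzj0, mul_zero] at h
          have h2 : u j0 * ((x ᵥ* A) ᵥ* B) k = 0 := by linear_combination -h
          exact (mul_eq_zero.mp h2).resolve_left hj0
      have hgz : g (iotaL (ZMod p) n (x ᵥ* A)) = 0 := by
        rw [giota, hz, hw0]
        simp
      have h0 : iotaL (ZMod p) n (x ᵥ* A) = 0 := by
        apply g.injective
        rw [hgz, map_zero]
      exact hx0 (hAinj x (iotaL_inj _ h0))
    · -- subcase w ≠ 0 : the image of g lies in a 3-dimensional subspace
      obtain ⟨i0, hi0⟩ : ∃ i0, w i0 ≠ 0 := by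
        by_contra hia
        push_neg at hia
        exact hw0 (funext hia)
      set zP : Fin n → ZMod p := ((Pi.single i0 1 : Fin n → ZMod p) ᵥ* A) ᵥ* B with hzPdef
      have hkey : ∀ x : Fin n → ZMod p, ∃ μ ν : ZMod p, x ᵥ* B = μ • zP + ν • u := by
        intro x
        obtain ⟨y, hyA⟩ : ∃ y, y ᵥ* A = x := ⟨x ᵥ* Polynomial.aeval A r, hAsurj x⟩
        have hwi0 : w i0 * (w i0)⁻¹ = 1 := mul_inv_cancel₀ hi0
        have hud : ∀ j k : Fin n, j < k →
            u j * ((x ᵥ* B) k - (y ⬝ᵥ w) * (w i0)⁻¹ * zP k)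
              = u k * ((x ᵥ* B) j - (y ⬝ᵥ w) * (w i0)⁻¹ * zP j) := by
          intro j k hjk
          have h1 := E2 y ⟨(j, k), hjk⟩
          have h2 := E2 (Pi.single i0 1) ⟨(j, k), hjk⟩
          rw [hyA] at h1
          rw [single_dot] at h2
          rw [← hzPdef] at h2
          linear_combination (-1 : ZMod p) * h1 + (y ⬝ᵥ w) * (w i0)⁻¹ * h2
            - (y ⬝ᵥ w) * c 0 ⟨(j, k), hjk⟩ * hwi0
        have hud' : ∀ j k : Fin n,
            u j * ((x ᵥ* B) k - (y ⬝ᵥ w) * (w i0)⁻¹ * zP k)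
              = u k * ((x ᵥ* B) j - (y ⬝ᵥ w) * (w i0)⁻¹ * zP j) := by
          intro j k
          rcases lt_trichotomy j k with h | h | h
          · exact hud j k h
          · rw [h]
          · exact (hud k j h).symm
        have hj0inv : u j0 * (u j0)⁻¹ = 1 := mul_inv_cancel₀ hj0
        refine ⟨(y ⬝ᵥ w) * (w i0)⁻¹,
          (u j0)⁻¹ * ((x ᵥ* B) j0 - (y ⬝ᵥ w) * (w i0)⁻¹ * zP j0), ?_⟩
        funext k
        simp only [Pi.add_apply, Pi.smul_apply, smul_eq_mul]
        have h := hud' j0 k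
        have h3 : u j0 * ((x ᵥ* B) k) = u j0 * ((y ⬝ᵥ w) * (w i0)⁻¹ * zP k
            + (u j0)⁻¹ * ((x ᵥ* B) j0 - (y ⬝ᵥ w) * (w i0)⁻¹ * zP j0) * u k) := by
          linear_combination h - u k * ((x ᵥ* B) j0 - (y ⬝ᵥ w) * (w i0)⁻¹ * zP j0) * hj0inv
        exact mul_left_cancel₀ hj0 h3
      set SS : Submodule (ZMod p) ((Fin 1 ⊕ Fin n) → ZMod p) :=
        Submodule.span (ZMod p)
          {e0V (ZMod p) n, iotaL (ZMod p) n zP, iotaL (ZMod p) n u} with hSSdef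
      have he0m : e0V (ZMod p) n ∈ SS := Submodule.subset_span (by simp)
      have hzPm : iotaL (ZMod p) n zP ∈ SS := Submodule.subset_span (by simp)
      have hum : iotaL (ZMod p) n u ∈ SS := Submodule.subset_span (by simp)
      have hmem : ∀ v, g v ∈ SS := by
        intro v
        have hrepr : g v = v (Sum.inl 0) • g (e0V (ZMod p) n)
            + g (iotaL (ZMod p) n fun i => v (Sum.inr i)) := by
          conv_lhs => rw [decompV v]
          rw [_root_.map_add, _root_.map_smul]
        rw [hrepr, ge0, giota]
        obtain ⟨μ, ν, hμν⟩ := hkey (fun i => v (Sum.inr i))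
        rw [hμν, _root_.map_add, _root_.map_smul, _root_.map_smul]
        refine Submodule.add_mem _ (Submodule.smul_mem _ _ (Submodule.add_mem _
          (Submodule.smul_mem _ _ he0m) hum)) (Submodule.add_mem _
          (Submodule.smul_mem _ _ he0m) (Submodule.add_mem _
          (Submodule.smul_mem _ _ hzPm) (Submodule.smul_mem _ _ hum)))
      have htop : SS = ⊤ := by
        rw [eq_top_iff]
        intro v _
        obtain ⟨v', rfl⟩ := g.surjective v
        exact hmem v'
      have h3 : finrank (ZMod p) SS ≤ 3 := by
        refine le_trans (finrank_span_le_card _) ?_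
        rw [Set.toFinset_insert, Set.toFinset_insert, Set.toFinset_singleton]
        refine le_trans (Finset.card_insert_le _ _) ?_
        refine Nat.succ_le_succ (le_trans (Finset.card_insert_le _ _) ?_)
        simp
      rw [htop, finrank_top, Module.finrank_pi] at h3
      simp only [Fintype.card_sum, Fintype.card_fin] at h3
      omega
  -- Step 2 : w = 0
  have hw0 : w = 0 := by
    funext i
    simp only [Pi.zero_apply]
    have h := E2 (Pi.single i 1) q0
    rw [hu0] at h
    simp only [Pi.zero_apply, zero_mul, sub_zero] at h
    rw [single_dot] at h
    exact (mul_eq_zero.mp h).resolve_right hq0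
  -- Step 3 : consequences
  have ge0' : g (e0V (ZMod p) n) = a • e0V (ZMod p) n := by
    rw [ge0, hu0, map_zero, add_zero]
  have ha0 : a ≠ 0 := by
    intro h
    have h1 : g (e0V (ZMod p) n) = 0 := by rw [ge0', h, zero_smul]
    have h2 : e0V (ZMod p) n = (0 : (Fin 1 ⊕ Fin n) → ZMod p) := by
      apply g.injective
      rw [h1, map_zero]
    exact one_ne_zero (congrFun h2 (Sum.inl 0))
  have giota' : ∀ y : Fin n → ZMod p,
      g (iotaL (ZMod p) n y) = iotaL (ZMod p) n (y ᵥ* B) := by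
    intro y
    rw [giota, hw0, dotProduct_zero, zero_smul, zero_add]
  have hBA : B * A = a • (A * B) := by
    ext i j
    have h := E1 (Pi.single i 1) j
    rw [hu0, hw0] at h
    simp only [dotProduct_zero, zero_mul, Pi.zero_apply, mul_zero, sub_zero,
      zero_add] at h
    rw [Matrix.vecMul_vecMul, Matrix.vecMul_vecMul, single_vecMul', single_vecMul'] at h
    simpa using h
  have hb0B : (b 0) ᵥ* B = b 0 := by
    funext j
    have h := E3a j
    rw [hu0, hw0] at h
    simp only [Matrix.zero_vecMul, Pi.zero_apply, mul_zero, zero_mul, sub_zero,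
      add_zero, Finset.sum_const_zero, dotProduct_zero] at h
    exact mul_left_cancel₀ ha0 h.symm
  have hBcancel : ∀ M : Matrix (Fin n) (Fin n) (ZMod p), M * B = 0 → M = 0 := by
    intro M hM
    have hxi : ∀ i, M i = 0 := by
      intro i
      have hr : M i ᵥ* B = 0 := by
        calc M i ᵥ* B = ((Pi.single i 1 : Fin n → ZMod p) ᵥ* M) ᵥ* B := by
              rw [single_vecMul']
        _ = (Pi.single i 1 : Fin n → ZMod p) ᵥ* (M * B) := Matrix.vecMul_vecMul _ _ _
        _ = 0 := by rw [hM, Matrix.vecMul_zero]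
      have h1 : g (iotaL (ZMod p) n (M i)) = 0 := by
        rw [giota', hr, map_zero]
      have h2 : iotaL (ZMod p) n (M i) = 0 := by
        apply g.injective
        rw [h1, map_zero]
      exact iotaL_inj _ h2
    ext i j
    simpa using congrFun (hxi i) j
  -- Step 4 : a = 1
  have hcommk : ∀ k : ℕ, B * A ^ k = (a ^ k) • (A ^ k * B) := by
    intro k
    induction k with
    | zero => simp
    | succ k ih =>
        calc B * A ^ (k + 1) = (B * A ^ k) * A := by rw [pow_succ, mul_assoc]
        _ = ((a ^ k) • (A ^ k * B)) * A := by rw [ih]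
        _ = (a ^ k) • (A ^ k * (B * A)) := by rw [Matrix.smul_mul, mul_assoc]
        _ = (a ^ k) • (A ^ k * (a • (A * B))) := by rw [hBA]
        _ = (a ^ (k + 1)) • (A ^ (k + 1) * B) := by
            rw [Matrix.mul_smul, smul_smul, ← mul_assoc, ← pow_succ, ← pow_succ]
  have haeval : ∀ q : Polynomial (ZMod p),
      (Polynomial.aeval (a • A) q) * B = B * Polynomial.aeval A q := by
    intro q
    induction q using Polynomial.induction_on' with
    | add f1 f2 h1 h2 => rw [_root_.map_add, _root_.map_add, add_mul, mul_add, h1, h2]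
    | monomial k t =>
        rw [Polynomial.aeval_monomial, Polynomial.aeval_monomial, _root_.smul_pow,
          ← Algebra.smul_def, ← Algebra.smul_def, Matrix.smul_mul, Matrix.mul_smul,
          hcommk k, Matrix.smul_mul]
  have hroot2 : Polynomial.aeval (a • A) m = 0 := by
    have h := haeval m
    rw [hmA, mul_zero] at h
    exact hBcancel _ h
  have hdvd2 : m ∣ m.comp (Polynomial.C a * Polynomial.X) := by
    have hdvd' : minpoly (ZMod p) A ∣ m.comp (Polynomial.C a * Polynomial.X) := by
      apply minpoly.dvd
      rw [Polynomial.aeval_comp]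
      have hax : Polynomial.aeval A (Polynomial.C a * Polynomial.X) = a • A := by
        rw [_root_.map_mul, Polynomial.aeval_C, Polynomial.aeval_X, ← Algebra.smul_def]
      rw [hax]
      exact hroot2
    rwa [hminA] at hdvd'
  obtain ⟨qq, hqq⟩ := hdvd2
  have hβ : Polynomial.aeval (algebraMap (ZMod p) (GaloisField p n) a * α) m = 0 := by
    have h1 : Polynomial.aeval α (m.comp (Polynomial.C a * Polynomial.X))
        = Polynomial.aeval (algebraMap (ZMod p) (GaloisField p n) a * α) m := by
      rw [Polynomial.aeval_comp, _root_.map_mul, Polynomial.aeval_C, Polynomial.aeval_X]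
    rw [← h1, hqq, _root_.map_mul, hmα, zero_mul]
  obtain ⟨k, hkn, hkeq⟩ := hroots _ (by rw [← hm]; exact hβ)
  have ha1 : a = 1 := by
    rcases Nat.eq_zero_or_pos k with hk0 | hkpos
    · subst hk0
      rw [pow_zero, pow_one] at hkeq
      have hmap1 : algebraMap (ZMod p) (GaloisField p n) a = 1 := by
        have h2 : (algebraMap (ZMod p) (GaloisField p n) a - 1) * α = 0 := by
          linear_combination hkeq
        rcases mul_eq_zero.mp h2 with h3 | h3
        · exact sub_eq_zero.mp h3
        · exact absurd h3 hα0
      apply (algebraMap (ZMod p) (GaloisField p n)).injective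
      rw [hmap1, _root_.map_one]
    · exfalso
      have hap : a ^ (p - 1) = 1 := ZMod.pow_card_sub_one_eq_one ha0
      have h1 : α ^ (p ^ k * (p - 1)) = α ^ (p - 1) := by
        rw [pow_mul, ← hkeq, mul_pow, ← _root_.map_pow, hap, _root_.map_one, one_mul]
      have hge : p - 1 ≤ p ^ k * (p - 1) :=
        Nat.le_mul_of_pos_left _ (pow_pos (by omega) k)
      have h2 : α ^ (p ^ k * (p - 1) - (p - 1)) * α ^ (p - 1) = α ^ (p - 1) := by
        rw [← pow_add, Nat.sub_add_cancel hge]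
        exact h1
      have h3 : α ^ (p ^ k * (p - 1) - (p - 1)) = 1 :=
        mul_right_cancel₀ (pow_ne_zero _ hα0) (h2.trans (one_mul _).symm)
      have h4 := orderOf_dvd_of_pow_eq_one h3
      rw [hα] at h4
      have h5 : p ^ k * (p - 1) - (p - 1) = (p ^ k - 1) * (p - 1) := by
        rw [Nat.sub_mul, one_mul]
      rw [h5] at h4
      have := aux_nat p n k hp2 hkn h4
      omega
  -- Step 5 : B acts as the identity
  have hABc : B * A = A * B := by rw [hBA, ha1, one_smul]
  have hfixk : ∀ k : ℕ, (b 0 ᵥ* A ^ k) ᵥ* B = b 0 ᵥ* A ^ k := by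
    intro k
    induction k with
    | zero => simpa [Matrix.vecMul_one] using hb0B
    | succ k ih =>
        calc (b 0 ᵥ* A ^ (k + 1)) ᵥ* B = b 0 ᵥ* (A ^ (k + 1) * B) := by
              rw [Matrix.vecMul_vecMul]
        _ = b 0 ᵥ* (A ^ k * (B * A)) := by rw [pow_succ, mul_assoc, ← hABc]
        _ = ((b 0 ᵥ* A ^ k) ᵥ* B) ᵥ* A := by
              rw [Matrix.vecMul_vecMul, Matrix.vecMul_vecMul]
        _ = (b 0 ᵥ* A ^ k) ᵥ* A := by rw [ih]
        _ = b 0 ᵥ* A ^ (k + 1) := by rw [Matrix.vecMul_vecMul, ← pow_succ]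
  have hspan := cyclic_span A (by rw [hminA]; exact hmirr) (by rw [hminA]; exact hdegm)
    (b 0) hbne hn0
  have hfix : ∀ x : Fin n → ZMod p, x ᵥ* B = x := by
    let SB : Submodule (ZMod p) (Fin n → ZMod p) :=
      { carrier := {x | x ᵥ* B = x}
        add_mem' := by
          intro x y hx hy
          simp only [Set.mem_setOf_eq] at *
          rw [Matrix.add_vecMul, hx, hy]
        zero_mem' := by
          simp only [Set.mem_setOf_eq]
          rw [Matrix.zero_vecMul]
        smul_mem' := by
          intro t x hx
          simp only [Set.mem_setOf_eq] at *
          rw [smul_vecMul', hx] }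
    intro x
    have hle : Submodule.span (ZMod p) (Set.range fun k : Fin n => b 0 ᵥ* A ^ (k : ℕ)) ≤ SB := by
      rw [Submodule.span_le]
      rintro y ⟨k, rfl⟩
      exact hfixk k
    rw [hspan] at hle
    exact hle Submodule.mem_top
  -- conclusion
  refine LinearEquiv.ext fun v => ?_
  rw [LinearEquiv.refl_apply]
  have hrepr : g v = v (Sum.inl 0) • g (e0V (ZMod p) n)
      + g (iotaL (ZMod p) n fun i => v (Sum.inr i)) := by
    conv_lhs => rw [decompV v]
    rw [_root_.map_add, _root_.map_smul]
  rw [hrepr, ge0', giota', ha1, one_smul, hfix]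
  exact (decompV v).symm
end

section
/- Let p be a prime, n ≥ 1, F = GF(p), α a primitive element of GF(p^n), m its minimal polynomial over F, and A the n×n companion matrix of m. If γ ∈ F^* and Δ ∈ GL(n, F) satisfy Δ A Δ^{-1} = γ A, then γ = 1. -/
open Polynomial in
lemma stmt13_aeval_conj {R S : Type*} [CommSemiring R] [Ring S] [Algebra R S]
    (u : Sˣ) (x : S) (f : Polynomial R) :
    aeval ((u : S) * x * (↑u⁻¹ : S)) f = (u : S) * aeval x f * (↑u⁻¹ : S) := by
  induction f using Polynomial.induction_on' with
  | add f g hf hg => simp [hf, hg, mul_add, add_mul]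
  | monomial k a =>
      rw [aeval_monomial, aeval_monomial, Units.conj_pow, ← mul_assoc,
        ← mul_assoc, Algebra.commutes]
      simp [mul_assoc]

lemma stmt13_arith (p d s e t : ℕ) (hp : 2 ≤ p) (hd : 2 ≤ d) (n : ℕ) (hdn : n = d * t)
    (ht : 1 ≤ t)
    (hdp : d ≤ p - 1) (hs : s ≤ t) (hspos : 1 ≤ s)
    (he' : e ≤ d) (he : e ∣ p ^ n - 1)
    (hdiv : (p ^ n - 1) / e ∣ p ^ s - 1) : False := by
  have hnt : t + 1 ≤ n := by nlinarith
  have hps1 : 1 ≤ p ^ s := Nat.one_le_pow _ _ (by omega)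
  have hpn1 : 1 ≤ p ^ n := Nat.one_le_pow _ _ (by omega)
  have hpt : p ≤ p ^ t := by
    calc p = p ^ 1 := (pow_one p).symm
    _ ≤ p ^ t := Nat.pow_le_pow_right (by omega) ht
  have hpt1 : 1 ≤ p ^ t := by omega
  have hle : (p ^ n - 1) / e ≤ p ^ s - 1 := by
    refine Nat.le_of_dvd ?_ hdiv
    have h2s : 2 ≤ p ^ s := by
      calc 2 = 2 ^ 1 := rfl
      _ ≤ p ^ 1 := Nat.pow_le_pow_left hp 1
      _ ≤ p ^ s := Nat.pow_le_pow_right (by omega) hspos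
    omega
  have h1 : p ^ n - 1 ≤ e * (p ^ s - 1) := by
    calc p ^ n - 1 = e * ((p ^ n - 1) / e) := (Nat.mul_div_cancel' he).symm
    _ ≤ e * (p ^ s - 1) := Nat.mul_le_mul_left _ hle
  have h2 : e * (p ^ s - 1) ≤ d * (p ^ t - 1) := by
    have : p ^ s ≤ p ^ t := Nat.pow_le_pow_right (by omega) hs
    exact Nat.mul_le_mul he' (by omega)
  have h3 : d * (p ^ t - 1) < p ^ n - 1 := by
    zify [hpt1, hpn1]
    have h6 : (p : ℤ) * p ^ t ≤ p ^ n := by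
      have : p * p ^ t ≤ p ^ n := by
        rw [← pow_succ']
        exact Nat.pow_le_pow_right (by omega) hnt
      exact_mod_cast this
    have hD : (d : ℤ) ≤ (p : ℤ) - 1 := by
      have h7 : d + 1 ≤ p := by omega
      have h8 : (d : ℤ) + 1 ≤ p := by exact_mod_cast h7
      linarith
    have hP : (p : ℤ) ≤ (p : ℤ) ^ t := by exact_mod_cast hpt
    have hp' : (2 : ℤ) ≤ p := by exact_mod_cast hp
    nlinarith [mul_le_mul_of_nonneg_right hD (by linarith : (0:ℤ) ≤ (p:ℤ) ^ t - 1)]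
  exact absurd (lt_of_le_of_lt (h1.trans h2) h3) (lt_irrefl _)

/-- Let `p` be a prime, `n ≥ 1`, `F = GF(p)`, `α` a primitive element of
`GF(pⁿ)`, `m` its minimal polynomial over `F`, and `A` the `n × n` companion matrix of `m`
(the matrix whose characteristic and minimal polynomials equal `m`). If `γ ∈ F^*` and
`Δ ∈ GL(n, F)` satisfy `Δ A Δ⁻¹ = γ A`, then `γ = 1`. -/
theorem stmt13 (p n : ℕ) [Fact p.Prime] (hn : 1 ≤ n)
    (α : GaloisField p n) (hα : orderOf α = p ^ n - 1)
    (m : Polynomial (ZMod p)) (hm : m = minpoly (ZMod p) α)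
    (A : Matrix (Fin n) (Fin n) (ZMod p))
    (hchar : A.charpoly = m) (hminA : minpoly (ZMod p) A = m)
    (γ : (ZMod p)ˣ) (Δ : (Matrix (Fin n) (Fin n) (ZMod p))ˣ)
    (hconj : (Δ : Matrix (Fin n) (Fin n) (ZMod p)) * A * ((↑Δ⁻¹ : Matrix (Fin n) (Fin n) (ZMod p))) = (γ : ZMod p) • A) :
    γ = 1 := by
  classical
  have hp2 : 2 ≤ p := (Fact.out : p.Prime).two_le
  have hpn2 : 2 ≤ p ^ n := by
    calc 2 = 2 ^ 1 := rfl
    _ ≤ p ^ 1 := Nat.pow_le_pow_left hp2 1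
    _ ≤ p ^ n := Nat.pow_le_pow_right (by omega) hn
  set c : ZMod p := (γ : ZMod p) with hc
  have hc0 : c ≠ 0 := γ.ne_zero
  have hα0 : α ≠ 0 := by
    intro h
    have h1 := pow_orderOf_eq_one α
    rw [hα, h, zero_pow (by omega)] at h1
    exact zero_ne_one h1
  have hint : IsIntegral (ZMod p) α := IsIntegral.of_finite _ _
  have hdegm : m.natDegree = n := by
    rw [← hchar, Matrix.charpoly_natDegree_eq_dim, Fintype.card_fin]
  have hmonic : m.Monic := hchar ▸ A.charpoly_monic
  have hmn : m.coeff n = 1 := by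
    have := hmonic.coeff_natDegree
    rwa [hdegm] at this
  -- the twisted polynomial q
  set q : Polynomial (ZMod p) :=
    ∑ k ∈ Finset.range (n+1), Polynomial.monomial k (c ^ k * m.coeff k) with hq
  have hqco : ∀ j, q.coeff j = if j < n+1 then c ^ j * m.coeff j else 0 := by
    intro j
    rw [hq, Polynomial.finset_sum_coeff]
    simp_rw [Polynomial.coeff_monomial]
    rw [Finset.sum_ite_eq' (Finset.range (n+1)) j]
    simp [Finset.mem_range]
  have haqm : Polynomial.aeval A q = Polynomial.aeval (c • A) m := by
    rw [hq, map_sum, Polynomial.aeval_eq_sum_range' (show m.natDegree < n+1 by omega)]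
    refine Finset.sum_congr rfl fun k _ => ?_
    rw [Polynomial.aeval_monomial, ← Algebra.smul_def, smul_pow, smul_smul, mul_comm]
  have haq : Polynomial.aeval A q = 0 := by
    have h0 : Polynomial.aeval A m = 0 := by
      rw [← hminA]; exact minpoly.aeval _ _
    rw [haqm, ← hconj, stmt13_aeval_conj, h0, mul_zero, zero_mul]
  have hdvd : m ∣ q := hminA ▸ minpoly.dvd (ZMod p) A haq
  have hq0 : q ≠ 0 := by
    intro h
    have := hqco n
    rw [h] at this
    simp [hmn] at this
    exact pow_ne_zero n hc0 this.symm
  have hqdeg : q.natDegree ≤ n := by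
    rw [hq]
    refine Polynomial.natDegree_sum_le_of_forall_le _ _ fun k hk => ?_
    exact (Polynomial.natDegree_monomial_le _).trans (by
      simpa using Nat.lt_succ_iff.mp (Finset.mem_range.mp hk))
  obtain ⟨r, hr⟩ := hdvd
  have hr0 : r ≠ 0 := fun h => hq0 (by rw [hr, h, mul_zero])
  have hrdeg : r.natDegree = 0 := by
    have := Polynomial.natDegree_mul (hmonic.ne_zero) hr0
    rw [← hr] at this
    omega
  obtain ⟨a, ha⟩ := Polynomial.natDegree_eq_zero.mp hrdeg
  have hcoeffs : ∀ j, j < n + 1 → c ^ j * m.coeff j = m.coeff j * a := by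
    intro j hj
    have h1 := hqco j
    rw [if_pos hj, hr, ← ha, Polynomial.coeff_mul_C] at h1
    exact h1.symm
  have hacn : a = c ^ n := by
    have := hcoeffs n (by omega)
    rw [hmn] at this
    simpa using this.symm
  have key : ∀ k, m.coeff k ≠ 0 → c ^ k = c ^ n := by
    intro k hk
    have hkn : k ≤ n := hdegm ▸ Polynomial.le_natDegree_of_ne_zero hk
    have := hcoeffs k (by omega)
    rw [hacn, mul_comm (m.coeff k)] at this
    exact mul_right_cancel₀ hk this
  have hm0 : m.coeff 0 ≠ 0 := by
    rw [hm]; exact minpoly.coeff_zero_ne_zero hint hα0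
  have hcn : c ^ n = 1 := by simpa using (key 0 hm0).symm
  -- order of γ
  set d : ℕ := orderOf γ with hdd
  have hγpow : ∀ k, c ^ k = 1 → d ∣ k := by
    intro k hk
    refine orderOf_dvd_of_pow_eq_one (Units.ext ?_)
    push_cast
    exact hk
  have hdn : d ∣ n := hγpow n hcn
  have hdk : ∀ k, m.coeff k ≠ 0 → d ∣ k := fun k hk => hγpow k (by rw [key k hk, hcn])
  have hd1 : 1 ≤ d := orderOf_pos γ
  rcases Nat.lt_or_ge d 2 with hd2 | hd2
  · -- d = 1
    have : d = 1 := by omega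
    exact orderOf_eq_one_iff.mp this
  -- d ≥ 2 : derive a contradiction
  exfalso
  set t : ℕ := n / d with htd
  have htn : n = d * t := (Nat.mul_div_cancel' hdn).symm
  have htpos : 1 ≤ t := by
    rcases Nat.eq_zero_or_pos t with h | h
    · rw [h, mul_zero] at htn; omega
    · exact h
  -- the polynomial g with g(X^d) = m
  set β : GaloisField p n := α ^ d with hβ
  have hβ0 : β ≠ 0 := pow_ne_zero _ hα0
  set g : Polynomial (ZMod p) :=
    ∑ i ∈ Finset.range (t+1), Polynomial.monomial i (m.coeff (d*i)) with hg
  have hgco : ∀ j, g.coeff j = if j < t+1 then m.coeff (d*j) else 0 := by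
    intro j
    rw [hg, Polynomial.finset_sum_coeff]
    simp_rw [Polynomial.coeff_monomial]
    rw [Finset.sum_ite_eq' (Finset.range (t+1)) j]
    simp [Finset.mem_range]
  have hg0 : g ≠ 0 := by
    intro h
    have := hgco t
    rw [h] at this
    simp at this
    rw [← htn, hmn] at this
    exact one_ne_zero this.symm
  have hgdeg : g.natDegree ≤ t := by
    rw [hg]
    refine Polynomial.natDegree_sum_le_of_forall_le _ _ fun k hk => ?_
    exact (Polynomial.natDegree_monomial_le _).trans (by
      simpa using Nat.lt_succ_iff.mp (Finset.mem_range.mp hk))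
  have haevalg : Polynomial.aeval β g = 0 := by
    have h0 : Polynomial.aeval α m = 0 := by rw [hm]; exact minpoly.aeval _ _
    rw [Polynomial.aeval_eq_sum_range' (show m.natDegree < n+1 by omega)] at h0
    have hfilter : ∑ k ∈ Finset.range (n+1), m.coeff k • α ^ k
        = ∑ k ∈ (Finset.range (n+1)).filter (fun k => d ∣ k), m.coeff k • α ^ k := by
      refine (Finset.sum_filter_of_ne fun k _ hk => ?_).symm
      refine hdk k fun h => hk ?_
      rw [h, zero_smul]
    have himg : (Finset.range (n+1)).filter (fun k => d ∣ k)
        = (Finset.range (t+1)).image (fun i => d * i) := by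
      ext k
      simp only [Finset.mem_filter, Finset.mem_image, Finset.mem_range]
      constructor
      · rintro ⟨hk, i, rfl⟩
        have h1 : d * i ≤ d * t := by rw [← htn]; omega
        exact ⟨i, Nat.lt_succ_of_le (Nat.le_of_mul_le_mul_left h1 (by omega)), rfl⟩
      · rintro ⟨i, hi, rfl⟩
        have h1 : d * i ≤ d * t := Nat.mul_le_mul_left _ (by omega)
        rw [← htn] at h1
        exact ⟨by omega, ⟨i, rfl⟩⟩
    rw [hfilter, himg, Finset.sum_image
      (fun i _ j _ h => Nat.eq_of_mul_eq_mul_left (by omega) h)] at h0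
    rw [hg, map_sum]
    rw [← h0]
    refine Finset.sum_congr rfl fun i _ => ?_
    rw [Polynomial.aeval_monomial, ← Algebra.smul_def, hβ, ← pow_mul]
  -- the subfield generated by β
  have hβint : IsIntegral (ZMod p) β := IsIntegral.of_finite _ _
  set s : ℕ := (minpoly (ZMod p) β).natDegree with hs
  have hst : s ≤ t := by
    have h1 := minpoly.degree_le_of_ne_zero (ZMod p) β hg0 haevalg
    have h2 : s ≤ g.natDegree := Polynomial.natDegree_le_natDegree h1
    omega
  have hspos : 1 ≤ s := minpoly.natDegree_pos hβint
  -- β lives in a field with p^s elements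
  have hβpow : β ^ (p ^ s - 1) = 1 := by
    set E := (IntermediateField.adjoin (ZMod p) {β}) with hE
    haveI : FiniteDimensional (ZMod p) E := by infer_instance
    haveI : Fintype E := Fintype.ofFinite E
    have hcard : Fintype.card E = p ^ s := by
      rw [Module.card_eq_pow_finrank (K := ZMod p), ZMod.card]
      congr 1
      exact IntermediateField.adjoin.finrank hβint
    set x : E := ⟨β, IntermediateField.mem_adjoin_simple_self (ZMod p) β⟩ with hx
    have hx0 : x ≠ 0 := by
      intro h
      apply hβ0
      have := congrArg (Subtype.val) h
      exact this
    have := FiniteField.pow_card_sub_one_eq_one x hx0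
    rw [hcard] at this
    have h2 := congrArg (Subtype.val) this
    push_cast at h2
    simpa using h2
  have horder : orderOf β ∣ p ^ s - 1 := orderOf_dvd_of_pow_eq_one hβpow
  have hob : orderOf β = (p ^ n - 1) / Nat.gcd (p ^ n - 1) d := by
    rw [hβ, orderOf_pow' α (by omega), hα]
  set e : ℕ := Nat.gcd (p ^ n - 1) d with he
  have hed : e ≤ d := Nat.le_of_dvd (by omega) (Nat.gcd_dvd_right _ _)
  have hepn : e ∣ p ^ n - 1 := Nat.gcd_dvd_left _ _
  have hdp : d ≤ p - 1 := by
    refine Nat.le_of_dvd (by omega) ?_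
    exact ZMod.orderOf_units_dvd_card_sub_one γ
  exact stmt13_arith p d s e t hp2 hd2 n htn htpos hdp hst hspos hed hepn
    (hob ▸ horder)
end

section
/- Let p be a prime, n ≥ 1, F = GF(p), α a primitive element of GF(p^n), m its minimal polynomial over F, and A the n×n companion matrix of m. If for some integer k ≥ 0 the matrix A^k has 1 as an eigenvalue (i.e., there is a nonzero vector v ∈ F^n with v·A^k = v), then A^k is the identity matrix, equivalently (p^n − 1) divides k. -/
/-- Let `p` be a prime, `n ≥ 1`, `F = GF(p)`, `α` a primitive element of
`GF(pⁿ)`, `m` its minimal polynomial over `F`, and `A` the `n × n` companion matrix of `m`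
(the matrix whose characteristic and minimal polynomials equal `m`). If for some `k ≥ 0`
the matrix `A^k` has `1` as an eigenvalue (there is a nonzero row vector `v` with
`v · A^k = v`), then `A^k` is the identity; equivalently `pⁿ - 1` divides `k`. -/
theorem stmt14 (p n : ℕ) [Fact p.Prime] (hn : 1 ≤ n)
    (α : GaloisField p n) (hα : orderOf α = p ^ n - 1)
    (m : Polynomial (ZMod p)) (hm : m = minpoly (ZMod p) α)
    (A : Matrix (Fin n) (Fin n) (ZMod p))
    (hchar : A.charpoly = m) (hminA : minpoly (ZMod p) A = m)
    (k : ℕ) (v : Fin n → ZMod p) (hv : v ≠ 0) (hfix : Matrix.vecMul v (A ^ k) = v) :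
    A ^ k = 1 ∧ (p ^ n - 1) ∣ k := by
  have hint : IsIntegral (ZMod p) α := Algebra.IsIntegral.isIntegral α
  have hirr : Irreducible m := hm ▸ minpoly.irreducible hint
  -- key: m ∣ X^k - 1
  have hdvd : m ∣ (Polynomial.X ^ k - 1 : Polynomial (ZMod p)) := by
    by_contra hnd
    obtain ⟨a, b, hab⟩ := hirr.coprime_iff_not_dvd.2 hnd
    -- evaluate at A
    have h0 : Polynomial.aeval A m = 0 := hminA ▸ minpoly.aeval _ _
    have h1 : Polynomial.aeval A (b * (Polynomial.X ^ k - 1)) = 1 := by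
      have := congrArg (Polynomial.aeval A) hab
      simpa [h0] using this
    set B : Matrix (Fin n) (Fin n) (ZMod p) := A ^ k - 1 with hB
    have hBval : Polynomial.aeval A (Polynomial.X ^ k - 1 : Polynomial (ZMod p)) = B := by
      simp [hB]
    have h2 : B * Polynomial.aeval A b = 1 := by
      rw [← hBval, ← map_mul, mul_comm]
      simpa using h1
    have hvB : Matrix.vecMul v B = 0 := by
      simp [hB, Matrix.vecMul_sub, hfix]
    have : v = 0 := by
      calc v = Matrix.vecMul v 1 := by simp
        _ = Matrix.vecMul v (B * Polynomial.aeval A b) := by rw [h2]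
        _ = Matrix.vecMul (Matrix.vecMul v B) (Polynomial.aeval A b) := by
              rw [Matrix.vecMul_vecMul]
        _ = 0 := by rw [hvB]; simp
    exact hv this
  obtain ⟨c, hc⟩ := hdvd
  constructor
  · have : Polynomial.aeval A (Polynomial.X ^ k - 1 : Polynomial (ZMod p)) = 0 := by
      have h0 : Polynomial.aeval A m = 0 := hminA ▸ minpoly.aeval _ _
      rw [hc, map_mul, h0, zero_mul]
    have : A ^ k - 1 = 0 := by simpa using this
    linear_combination (norm := abel) this
  · have : Polynomial.aeval α (Polynomial.X ^ k - 1 : Polynomial (ZMod p)) = 0 := by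
      have h0 : Polynomial.aeval α m = 0 := hm ▸ minpoly.aeval _ _
      rw [hc, map_mul, h0, zero_mul]
    have hαk : α ^ k = 1 := by
      have := this
      simp only [map_sub, map_pow, map_one, Polynomial.aeval_X, sub_eq_zero] at this
      exact this
    exact hα ▸ orderOf_dvd_of_pow_eq_one hαk
end

section
/- Let F be a field and A the n×n companion matrix over F of a monic irreducible polynomial of degree n ≥ 1. If γ ∈ F is nonzero and Δ is an n×n matrix over F satisfying Δ A = γ A Δ, then either Δ = 0 or Δ is invertible. -/
open Polynomial

/-- Simplicity of `F^n` as a module over `F[A]` when the minimal polynomial of `A`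
is irreducible of degree `n`: every `A`-invariant subspace is trivial. -/
lemma stmt16_aux (F : Type*) [Field F] (n : ℕ) (hn : 1 ≤ n)
    (m : Polynomial F) (hmonic : m.Monic) (hirr : Irreducible m) (hdeg : m.natDegree = n)
    (A : Matrix (Fin n) (Fin n) F) (hminA : minpoly F A = m)
    (W : Submodule F (Fin n → F)) (hW : ∀ x ∈ W, A.mulVec x ∈ W) :
    W = ⊥ ∨ W = ⊤ := by
  by_cases hbot : W = ⊥
  · exact Or.inl hbot
  right
  obtain ⟨v, hvW, hv0⟩ := Submodule.ne_bot_iff W |>.mp hbot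
  have hm0 : m ≠ 0 := hmonic.ne_zero
  have hdegm : m.degree = (n : WithBot ℕ) := by
    rw [← hdeg, Polynomial.degree_eq_natDegree hm0]
  have hmA : Polynomial.aeval A m = 0 := by rw [← hminA]; exact minpoly.aeval F A
  -- the family `v, A v, ..., A^(n-1) v`
  set g : Fin n → (Fin n → F) := fun i => (A ^ (i : ℕ)).mulVec v with hg
  have hpowW : ∀ k : ℕ, (A ^ k).mulVec v ∈ W := by
    intro k
    induction k with
    | zero => simpa using hvW
    | succ k ih =>
        rw [pow_succ', ← Matrix.mulVec_mulVec]
        exact hW _ ih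
  have hgW : ∀ i, g i ∈ W := fun i => hpowW i
  have hsum : ∀ {ι : Type} (s : Finset ι) (f : ι → Matrix (Fin n) (Fin n) F),
      (∑ j ∈ s, f j).mulVec v = ∑ j ∈ s, (f j).mulVec v := by
    intro ι s f
    exact map_sum (Matrix.mulVec.addMonoidHomLeft v) f s
  have hli : LinearIndependent F g := by
    rw [Fintype.linearIndependent_iff]
    intro c hc i
    by_contra hci
    set p : Polynomial F := ∑ j : Fin n, Polynomial.C (c j) * Polynomial.X ^ (j : ℕ) with hp
    have hpc : p.coeff (i : ℕ) = c i := by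
      rw [hp, Polynomial.finset_sum_coeff]
      simp only [Polynomial.coeff_C_mul, Polynomial.coeff_X_pow]
      rw [Finset.sum_eq_single i]
      · simp
      · intro b _ hb
        have hne : (i : ℕ) ≠ (b : ℕ) := fun h => hb (Fin.ext h.symm)
        rw [if_neg hne, mul_zero]
      · simp
    have hpne : p ≠ 0 := fun h => hci (by rw [← hpc, h, Polynomial.coeff_zero])
    have hdegp : p.degree < m.degree := by
      rw [hdegm, hp]
      apply lt_of_le_of_lt (Polynomial.degree_sum_le _ _)
      rw [Finset.sup_lt_iff (by exact_mod_cast WithBot.bot_lt_coe n)]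
      intro b _
      apply lt_of_le_of_lt (Polynomial.degree_C_mul_X_pow_le _ _)
      exact_mod_cast Nat.cast_lt.mpr b.isLt
    have hndvd : ¬ m ∣ p := fun h => hpne (Polynomial.eq_zero_of_dvd_of_degree_lt h hdegp)
    obtain ⟨a, b, hab⟩ := (hirr.coprime_iff_not_dvd.mpr hndvd)
    have hev : Polynomial.aeval A b * Polynomial.aeval A p = 1 := by
      have := congrArg (Polynomial.aeval A) hab
      simpa [hmA] using this
    have hpv : (Polynomial.aeval A p).mulVec v = 0 := by
      have hps : Polynomial.aeval A p = ∑ j : Fin n, c j • A ^ (j : ℕ) := by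
        rw [hp, map_sum]
        congr 1
        ext j
        rw [map_mul, Polynomial.aeval_C, map_pow, Polynomial.aeval_X, Algebra.smul_def]
      rw [hps, hsum]
      simp only [Matrix.smul_mulVec]
      exact hc
    have : v = 0 := by
      calc v = (1 : Matrix (Fin n) (Fin n) F).mulVec v := by simp
        _ = (Polynomial.aeval A b * Polynomial.aeval A p).mulVec v := by rw [hev]
        _ = (Polynomial.aeval A b).mulVec ((Polynomial.aeval A p).mulVec v) := by
            rw [← Matrix.mulVec_mulVec]
        _ = 0 := by rw [hpv, Matrix.mulVec_zero]
    exact hv0 this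
  have hcard : Fintype.card (Fin n) = Module.finrank F (Fin n → F) := by
    simp
  haveI : Nonempty (Fin n) := ⟨⟨0, hn⟩⟩
  have hspan := hli.span_eq_top_of_card_eq_finrank hcard
  rw [eq_top_iff, ← hspan]
  apply Submodule.span_le.mpr
  rintro x ⟨i, rfl⟩
  exact hgW i

/-- Let `F` be a field and `A` the `n × n` companion matrix over `F` of a
monic irreducible polynomial `m` of degree `n ≥ 1` (the matrix whose characteristic and
minimal polynomials equal `m`). If `γ ∈ F` is nonzero and `Δ` is an `n × n` matrix over `F`
with `Δ A = γ A Δ`, then either `Δ = 0` or `Δ` is invertible. -/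
theorem stmt16 (F : Type*) [Field F] (n : ℕ) (hn : 1 ≤ n)
    (m : Polynomial F) (hmonic : m.Monic) (hirr : Irreducible m) (hdeg : m.natDegree = n)
    (A : Matrix (Fin n) (Fin n) F)
    (hchar : A.charpoly = m) (hminA : minpoly F A = m)
    (γ : F) (hγ : γ ≠ 0) (Δ : Matrix (Fin n) (Fin n) F)
    (hcomm : Δ * A = γ • (A * Δ)) :
    Δ = 0 ∨ IsUnit Δ := by
  by_cases hΔ : Δ = 0
  · exact Or.inl hΔ
  right
  have hAD : A * Δ = γ⁻¹ • (Δ * A) := by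
    rw [hcomm, smul_smul, inv_mul_cancel₀ hγ, one_smul]
  set W := LinearMap.range (Matrix.mulVecLin Δ) with hWdef
  have hW : ∀ x ∈ W, A.mulVec x ∈ W := by
    rintro x ⟨y, rfl⟩
    refine ⟨γ⁻¹ • A.mulVec y, ?_⟩
    simp only [Matrix.mulVecLin_apply]
    rw [Matrix.mulVec_smul, Matrix.mulVec_mulVec, ← Matrix.smul_mulVec, ← hAD,
      ← Matrix.mulVec_mulVec]
  rcases stmt16_aux F n hn m hmonic hirr hdeg A hminA W hW with h | h
  · exfalso
    apply hΔ
    have h0 : Matrix.mulVecLin Δ = 0 := LinearMap.range_eq_bot.mp h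
    ext i j
    have h1 := congrFun (LinearMap.congr_fun h0 (Pi.single j 1)) i
    simpa [Matrix.mulVecLin_apply, Matrix.mulVec_single] using h1
  · apply Matrix.mulVec_surjective_iff_isUnit.mp
    intro x
    have : x ∈ W := h ▸ Submodule.mem_top
    obtain ⟨y, hy⟩ := this
    exact ⟨y, hy⟩
end

section
/- Let p be an odd prime and P a finite p-group in which every automorphism is central, i.e., for every automorphism φ of P and every a ∈ P, φ(a)·a^{-1} lies in the center Z(P). If a ∈ P does not lie in Z(P), then no automorphism of P maps a to a^{-1}. -/
/-- Let `p` be an odd prime and `P` a finite `p`-group in which every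
automorphism is central (for every automorphism `φ` and every `a ∈ P`, `φ(a)·a⁻¹ ∈ Z(P)`).
If `a ∈ P` does not lie in the center, then no automorphism of `P` maps `a` to `a⁻¹`. -/
theorem stmt18 (p : ℕ) (hp : p.Prime) (hodd : Odd p)
    (P : Type*) [Group P] [Finite P] (hP : IsPGroup p P)
    (hcentral : ∀ φ : MulAut P, ∀ a : P, φ a * a⁻¹ ∈ Subgroup.center P)
    (a : P) (ha : a ∉ Subgroup.center P) :
    ∀ φ : MulAut P, φ a ≠ a⁻¹ := by
  intro φ h
  have h1 := hcentral φ a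
  rw [h] at h1
  have hsq : a ^ 2 ∈ Subgroup.center P := by
    have := (Subgroup.center P).inv_mem h1
    simpa [pow_two, mul_inv_rev] using this
  -- pass to quotient
  set Q := P ⧸ Subgroup.center P
  have hQ : IsPGroup p Q := hP.to_quotient _
  set x : Q := QuotientGroup.mk a with hx
  have hx2 : x ^ 2 = 1 := by
    rw [hx, ← QuotientGroup.mk_pow, QuotientGroup.eq_one_iff]
    exact hsq
  obtain ⟨k, hk⟩ := hQ x
  have hd2 : orderOf x ∣ 2 := orderOf_dvd_of_pow_eq_one hx2
  have hdp : orderOf x ∣ p ^ k := orderOf_dvd_of_pow_eq_one hk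
  have h1' : orderOf x = 1 := by
    have := Nat.dvd_gcd hd2 hdp
    have hg : Nat.gcd 2 (p ^ k) = 1 :=
      Nat.Coprime.pow_right _ (Nat.coprime_two_left.mpr hodd)
    exact Nat.eq_one_of_dvd_one (hg ▸ this)
  have : x = 1 := orderOf_eq_one_iff.mp h1'
  rw [hx, QuotientGroup.eq_one_iff] at this
  exact ha this
end
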